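/- arXiv:2411.01364 — 3 statements merged into one kernel-verified Lean document; each statement's English description precedes it below -/
import Mathlib

section
/- On an order interval [μ, ν] ⊂ 𝒫₂(ℝ) of the stochastic order, the following modes of convergence are equivalent for a sequence ρₙ ∈ [μ,ν] and ρ ∈ [μ,ν]: (i) 𝒲₂(ρₙ, ρ) → 0; (ii) 𝒲_p(ρₙ, ρ) → 0 for all 1 ≤ p < 2; (iii) ρₙ → ρ weakly. -/
open MeasureTheory Filter Set ENNReal

noncomputable section

/-- The stochastic order on measures on ℝ: `μ ≤_st ν` iff `∫ f dμ ≤ ∫ f dν`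
for every bounded increasing function `f : ℝ → ℝ`. -/
def StOrder (μ ν : Measure ℝ) : Prop :=
  ∀ f : ℝ → ℝ, Monotone f → (∃ C : ℝ, ∀ x, |f x| ≤ C) →
    ∫ x, f x ∂μ ≤ ∫ x, f x ∂ν

/-- `𝒫₂(ℝ)`: probability measures on ℝ with finite second moment. -/
def P2 : Set (Measure ℝ) :=
  {μ | IsProbabilityMeasure μ ∧ Integrable (fun x : ℝ => x ^ 2) μ}

/-- The `p`-Wasserstein distance (ENNReal-valued), as an infimum over couplings. -/
def Wp (p : ℝ) (μ ν : Measure ℝ) : ℝ≥0∞ :=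
  ⨅ (π : Measure (ℝ × ℝ)) (_ : π.map Prod.fst = μ) (_ : π.map Prod.snd = ν),
    (∫⁻ q, ENNReal.ofReal (|q.1 - q.2| ^ p) ∂π) ^ (1 / p)

/-- The 2-Wasserstein distance. -/
def W2 (μ ν : Measure ℝ) : ℝ≥0∞ := Wp 2 μ ν

/-- Convergence of a sequence of measures in the 2-Wasserstein distance. -/
def W2Tendsto (μs : ℕ → Measure ℝ) (μ : Measure ℝ) : Prop :=
  Tendsto (fun n => W2 (μs n) μ) atTop (nhds 0)


open ProbabilityTheory Topology

namespace OICE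

/-- quantile function -/
def Q (ρ : Measure ℝ) (u : ℝ) : ℝ := sInf {x | u ≤ cdf ρ x}

variable {ρ σ : Measure ℝ}

lemma Sne [IsProbabilityMeasure ρ] {u : ℝ} (hu1 : u < 1) : {x | u ≤ cdf ρ x}.Nonempty := by
  obtain ⟨x, hx⟩ := ((tendsto_cdf_atTop ρ).eventually_const_lt hu1).exists
  exact ⟨x, hx.le⟩

lemma Sbdd [IsProbabilityMeasure ρ] {u : ℝ} (hu0 : 0 < u) : BddBelow {x | u ≤ cdf ρ x} := by
  obtain ⟨a, ha⟩ := eventually_atBot.mp ((tendsto_cdf_atBot ρ).eventually_lt_const hu0)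
  refine ⟨a, fun y hy => ?_⟩
  by_contra hxy
  push_neg at hxy
  exact absurd hy (not_le.mpr (ha y hxy.le))

lemma mem_S_sInf [IsProbabilityMeasure ρ] {u : ℝ} (hu0 : 0 < u) (hu1 : u < 1) :
    u ≤ cdf ρ (Q ρ u) := by
  by_contra h
  push_neg at h
  have hrc : ContinuousWithinAt (cdf ρ) (Ici (Q ρ u)) (Q ρ u) := (cdf ρ).right_continuous _
  have hev : ∀ᶠ y in 𝓝[Ici (Q ρ u)] (Q ρ u), cdf ρ y < u := hrc.eventually_lt_const h
  obtain ⟨s, hs, hs'⟩ := eventually_nhdsWithin_iff.mp hev |>.exists_mem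
  obtain ⟨δ, hδ, hball⟩ := Metric.mem_nhds_iff.mp hs
  obtain ⟨a, haS, halt⟩ := Real.lt_sInf_add_pos (Sne (ρ := ρ) hu1) hδ
  have h1 : Q ρ u ≤ a := csInf_le (Sbdd hu0) haS
  have h2 : a ∈ Metric.ball (Q ρ u) δ := by
    rw [Metric.mem_ball, Real.dist_eq, abs_of_nonneg (by linarith)]
    simp only [Q]; linarith [halt]
  exact absurd haS (not_le.mpr (hs' a (hball h2) h1))

lemma Q_le_iff [IsProbabilityMeasure ρ] {u x : ℝ} (hu0 : 0 < u) (hu1 : u < 1) :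
    Q ρ u ≤ x ↔ u ≤ cdf ρ x :=
  ⟨fun h => le_trans (mem_S_sInf hu0 hu1) (monotone_cdf ρ h),
   fun h => csInf_le (Sbdd hu0) h⟩

lemma Q_monotoneOn [IsProbabilityMeasure ρ] : MonotoneOn (Q ρ) (Ioo 0 1) := fun u hu v hv huv =>
  le_csInf (Sne hv.2) fun _ hx => csInf_le (Sbdd hu.1) (le_trans huv hx)

lemma Q_aemeasurable [IsProbabilityMeasure ρ] :
    AEMeasurable (Q ρ) (volume.restrict (Ioo (0:ℝ) 1)) :=
  aemeasurable_restrict_of_monotoneOn measurableSet_Ioo Q_monotoneOn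

/-- The quantile pushes Lebesgue measure on (0,1) forward to ρ. -/
lemma map_Q [IsProbabilityMeasure ρ] : (volume.restrict (Ioo (0:ℝ) 1)).map (Q ρ) = ρ := by
  have hprob : IsProbabilityMeasure ((volume.restrict (Ioo (0:ℝ) 1)).map (Q ρ)) := by
    constructor
    rw [Measure.map_apply_of_aemeasurable Q_aemeasurable MeasurableSet.univ]
    simp [Real.volume_Ioo]
  refine Measure.ext_of_Iic _ _ (fun x => ?_)
  rw [Measure.map_apply_of_aemeasurable Q_aemeasurable measurableSet_Iic]
  have hset : Ioo (0:ℝ) 1 ∩ (Q ρ ⁻¹' Iic x) = Ioo (0:ℝ) 1 ∩ Iic (cdf ρ x) := by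
    ext u
    simp only [mem_inter_iff, mem_Ioo, mem_preimage, mem_Iic]
    exact and_congr_right fun hu => Q_le_iff hu.1 hu.2
  rw [Measure.restrict_apply₀' measurableSet_Ioo.nullMeasurableSet, inter_comm, hset]
  have h0 : 0 ≤ cdf ρ x := cdf_nonneg ρ x
  have h1 : cdf ρ x ≤ 1 := cdf_le_one ρ x
  rcases lt_or_ge (cdf ρ x) 1 with hc | hc
  · have : Ioo (0:ℝ) 1 ∩ Iic (cdf ρ x) = Ioc 0 (cdf ρ x) := by
      ext u; simp only [mem_inter_iff, mem_Ioo, mem_Ioc, mem_Iic]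
      constructor
      · rintro ⟨⟨h01, _⟩, h2⟩; exact ⟨h01, h2⟩
      · rintro ⟨h01, h2⟩; exact ⟨⟨h01, lt_of_le_of_lt h2 hc⟩, h2⟩
    rw [this, Real.volume_Ioc, ← ofReal_cdf ρ x]
    simp
  · have hc1 : cdf ρ x = 1 := le_antisymm h1 hc
    have : Ioo (0:ℝ) 1 ∩ Iic (cdf ρ x) = Ioo (0:ℝ) 1 := by
      rw [hc1]; exact inter_eq_left.mpr (fun u hu => le_of_lt hu.2)
    rw [this, Real.volume_Ioo, ← ofReal_cdf ρ x, hc1]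
    simp

lemma cdf_anti_of_st [IsProbabilityMeasure ρ] [IsProbabilityMeasure σ]
    (h : StOrder ρ σ) (t : ℝ) : cdf σ t ≤ cdf ρ t := by
  have hmono : Monotone ((Ioi t).indicator (1 : ℝ → ℝ)) := by
    intro x y hxy
    by_cases hx : x ∈ Ioi t
    · have hy : y ∈ Ioi t := lt_of_lt_of_le hx hxy
      simp [indicator_of_mem, hx, hy]
    · by_cases hy : y ∈ Ioi t <;> simp [indicator, hx, hy]
  have hbd : ∃ C : ℝ, ∀ x, |(Ioi t).indicator (1 : ℝ → ℝ) x| ≤ C := by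
    refine ⟨1, fun x => ?_⟩
    by_cases hx : x ∈ Ioi t <;> simp [indicator, hx]
  have hint := h _ hmono hbd
  rw [integral_indicator_one measurableSet_Ioi, integral_indicator_one measurableSet_Ioi] at hint
  have hρσ : ρ (Ioi t) ≤ σ (Ioi t) :=
    (ENNReal.toReal_le_toReal (measure_ne_top ρ _) (measure_ne_top σ _)).mp hint
  have h1 : σ (Iic t) ≤ ρ (Iic t) := by
    have e1 : ∀ (m : Measure ℝ) [IsProbabilityMeasure m], m (Iic t) = 1 - m (Ioi t) := by
      intro m _
      rw [← compl_Ioi, measure_compl measurableSet_Ioi (measure_ne_top m _), measure_univ]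
    rw [e1 σ, e1 ρ]
    exact tsub_le_tsub_left hρσ 1
  rw [cdf_eq_real, cdf_eq_real]
  exact ENNReal.toReal_mono (measure_ne_top ρ _) h1

lemma Q_le_Q_of_st [IsProbabilityMeasure ρ] [IsProbabilityMeasure σ]
    (h : StOrder ρ σ) {u : ℝ} (hu : u ∈ Ioo (0:ℝ) 1) : Q ρ u ≤ Q σ u :=
  csInf_le_csInf (Sbdd hu.1) (Sne hu.2)
    (fun x hx => le_trans hx (cdf_anti_of_st h x))

/-- upper quantile -/
def Qp (ρ : Measure ℝ) (u : ℝ) : ℝ := sInf {x | u < cdf ρ x}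

lemma Spne [IsProbabilityMeasure ρ] {u : ℝ} (hu1 : u < 1) : {x | u < cdf ρ x}.Nonempty :=
  ((tendsto_cdf_atTop ρ).eventually_const_lt hu1).exists

lemma Spbdd [IsProbabilityMeasure ρ] {u : ℝ} (hu0 : 0 < u) : BddBelow {x | u < cdf ρ x} :=
  BddBelow.mono (fun x (hx : u < cdf ρ x) => (le_of_lt hx : u ≤ cdf ρ x)) (Sbdd hu0)

lemma Q_le_Qp [IsProbabilityMeasure ρ] {u : ℝ} (hu0 : 0 < u) (hu1 : u < 1) :
    Q ρ u ≤ Qp ρ u :=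
  le_csInf (Spne hu1) (fun x (hx : u < cdf ρ x) => csInf_le (Sbdd hu0) (le_of_lt hx : u ≤ cdf ρ x))

lemma Qp_le_Q_of_lt [IsProbabilityMeasure ρ] {u v : ℝ} (hu0 : 0 < u) (huv : u < v)
    (hv1 : v < 1) : Qp ρ u ≤ Q ρ v :=
  csInf_le_csInf (Spbdd hu0) (Sne hv1)
    (fun x (hx : v ≤ cdf ρ x) => (lt_of_lt_of_le huv hx : u < cdf ρ x))

lemma countable_bad [IsProbabilityMeasure ρ] :
    {u : ℝ | u ∈ Ioo (0:ℝ) 1 ∧ Q ρ u < Qp ρ u}.Countable := by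
  set B := {u : ℝ | u ∈ Ioo (0:ℝ) 1 ∧ Q ρ u < Qp ρ u}
  have hpick : ∀ u ∈ B, ∃ q : ℚ, Q ρ u < (q:ℝ) ∧ (q:ℝ) < Qp ρ u := by
    intro u hu
    obtain ⟨q, hq1, hq2⟩ := exists_rat_btwn hu.2
    exact ⟨q, hq1, hq2⟩
  choose! f hf1 hf2 using hpick
  apply countable_of_injective_of_countable_image (f := f) ?_ (Set.to_countable _)
  intro u hu v hv huv
  by_contra hne
  rcases lt_or_gt_of_ne hne with hlt | hlt
  · have : (f u : ℝ) < (f v : ℝ) :=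
      lt_of_lt_of_le (hf2 u hu) (le_trans (Qp_le_Q_of_lt hu.1.1 hlt hv.1.2) (le_of_lt (hf1 v hv)))
    rw [huv] at this; exact lt_irrefl _ this
  · have : (f v : ℝ) < (f u : ℝ) :=
      lt_of_lt_of_le (hf2 v hv) (le_trans (Qp_le_Q_of_lt hv.1.1 hlt hu.1.2) (le_of_lt (hf1 u hu)))
    rw [huv] at this; exact lt_irrefl _ this

lemma exists_good_in_Ioo {a b : ℝ} (hab : a < b) {T : Set ℝ} (hT : T.Countable) :
    ∃ x, x ∈ Ioo a b ∧ x ∉ T := by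
  by_contra hcon
  push_neg at hcon
  have hsub : Ioo a b ⊆ T := fun x hx => hcon x hx
  have := measure_mono (μ := volume) hsub
  rw [hT.measure_zero] at this
  rw [Real.volume_Ioo] at this
  simp only [nonpos_iff_eq_zero, ofReal_eq_zero] at this
  linarith

lemma Q_tendsto {ρs : ℕ → Measure ℝ} {ρ : Measure ℝ} [∀ n, IsProbabilityMeasure (ρs n)]
    [IsProbabilityMeasure ρ]
    (hconv : ∀ t, ContinuousAt (cdf ρ) t → Tendsto (fun n => cdf (ρs n) t) atTop (𝓝 (cdf ρ t)))
    {u : ℝ} (hu : u ∈ Ioo (0:ℝ) 1) (hgood : ¬ Q ρ u < Qp ρ u) :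
    Tendsto (fun n => Q (ρs n) u) atTop (𝓝 (Q ρ u)) := by
  have hT : {t : ℝ | ¬ ContinuousAt (cdf ρ) t}.Countable :=
    Monotone.countable_not_continuousAt (monotone_cdf ρ)
  rw [tendsto_order]
  constructor
  · intro b hb
    obtain ⟨x, hx, hxT⟩ := exists_good_in_Ioo hb hT
    have hcont : ContinuousAt (cdf ρ) x := not_not.mp hxT
    have hxlt : cdf ρ x < u := by
      by_contra hc; push_neg at hc
      exact absurd (csInf_le (Sbdd hu.1) hc) (not_le.mpr hx.2)
    filter_upwards [(hconv x hcont).eventually_lt_const hxlt] with n hn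
    have hgt : ¬ Q (ρs n) u ≤ x := fun hle =>
      absurd ((Q_le_iff hu.1 hu.2).mp hle) (not_le.mpr hn)
    push_neg at hgt
    linarith [hx.1]
  · intro b hb
    have hqp : Qp ρ u ≤ Q ρ u := not_lt.mp hgood
    obtain ⟨x, hx, hxT⟩ := exists_good_in_Ioo hb hT
    have hcont : ContinuousAt (cdf ρ) x := not_not.mp hxT
    have hQpx : Qp ρ u < x := lt_of_le_of_lt hqp hx.1
    obtain ⟨y, hyS, hyx⟩ := exists_lt_of_csInf_lt (Spne hu.2) hQpx
    have hxgt : u < cdf ρ x := lt_of_lt_of_le hyS (monotone_cdf ρ hyx.le)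
    filter_upwards [(hconv x hcont).eventually_const_lt hxgt] with n hn
    exact lt_of_le_of_lt ((Q_le_iff hu.1 hu.2).mpr hn.le) hx.2

/-- a.e. convergence of quantiles -/
lemma Q_tendsto_ae {ρs : ℕ → Measure ℝ} {ρ : Measure ℝ} [∀ n, IsProbabilityMeasure (ρs n)]
    [IsProbabilityMeasure ρ]
    (hconv : ∀ t, ContinuousAt (cdf ρ) t → Tendsto (fun n => cdf (ρs n) t) atTop (𝓝 (cdf ρ t))) :
    ∀ᵐ u ∂(volume.restrict (Ioo (0:ℝ) 1)),
      Tendsto (fun n => Q (ρs n) u) atTop (𝓝 (Q ρ u)) := by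
  have hbad : volume {u : ℝ | u ∈ Ioo (0:ℝ) 1 ∧ Q ρ u < Qp ρ u} = 0 :=
    (countable_bad).measure_zero _
  have h1 : ∀ᵐ u ∂(volume.restrict (Ioo (0:ℝ) 1)), u ∈ Ioo (0:ℝ) 1 :=
    ae_restrict_mem measurableSet_Ioo
  have h2 : ∀ᵐ u ∂(volume.restrict (Ioo (0:ℝ) 1)),
      ¬ (u ∈ Ioo (0:ℝ) 1 ∧ Q ρ u < Qp ρ u) := by
    apply ae_restrict_of_ae
    exact (measure_eq_zero_iff_ae_notMem.mp hbad)
  filter_upwards [h1, h2] with u hu hbadu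
  exact Q_tendsto hconv hu (fun hlt => hbadu ⟨hu, hlt⟩)

lemma lintegral_ofReal_sq_lt_top [IsProbabilityMeasure ρ]
    (hint : Integrable (fun x : ℝ => x ^ 2) ρ) :
    ∫⁻ u in Ioo (0:ℝ) 1, ENNReal.ofReal ((Q ρ u) ^ 2) < ⊤ := by
  have hmeas : Measurable (fun x : ℝ => ENNReal.ofReal (x ^ 2)) :=
    (measurable_id.pow_const 2).ennreal_ofReal
  have := hint.2
  rw [hasFiniteIntegral_iff_norm] at this
  calc ∫⁻ u in Ioo (0:ℝ) 1, ENNReal.ofReal ((Q ρ u) ^ 2)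
      = ∫⁻ x, ENNReal.ofReal (x ^ 2) ∂((volume.restrict (Ioo (0:ℝ) 1)).map (Q ρ)) := by
        rw [lintegral_map' hmeas.aemeasurable Q_aemeasurable]
    _ = ∫⁻ x, ENNReal.ofReal (x ^ 2) ∂ρ := by rw [map_Q]
    _ < ⊤ := by
        refine lt_of_le_of_lt (lintegral_mono (fun x => ?_)) this
        rw [Real.norm_eq_abs, abs_of_nonneg (sq_nonneg x)]

lemma integral_tendsto_of_Q_tendsto {ρs : ℕ → Measure ℝ} {ρ : Measure ℝ}
    [∀ n, IsProbabilityMeasure (ρs n)] [IsProbabilityMeasure ρ]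
    (hae : ∀ᵐ u ∂(volume.restrict (Ioo (0:ℝ) 1)),
      Tendsto (fun n => Q (ρs n) u) atTop (𝓝 (Q ρ u)))
    {f : ℝ → ℝ} (hf : Continuous f) {C : ℝ} (hC : ∀ x, |f x| ≤ C) :
    Tendsto (fun n => ∫ x, f x ∂(ρs n)) atTop (𝓝 (∫ x, f x ∂ρ)) := by
  have key : ∀ (m : Measure ℝ) [IsProbabilityMeasure m],
      ∫ x, f x ∂m = ∫ u in Ioo (0:ℝ) 1, f (Q m u) := by
    intro m _
    conv_lhs => rw [← map_Q (ρ := m)]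
    exact integral_map Q_aemeasurable hf.aestronglyMeasurable
  simp_rw [key]
  apply tendsto_integral_of_dominated_convergence (fun _ => C)
  · exact fun n => ((hf.measurable.comp_aemeasurable Q_aemeasurable).aestronglyMeasurable)
  · exact integrable_const C
  · exact fun n => Eventually.of_forall (fun u => hC _)
  · filter_upwards [hae] with u hu
    exact (hf.tendsto (Q ρ u)).comp hu

/-- sandwich function: 1 on Iic t, 0 outside Iic (t+δ), Lipschitz 1/δ -/
def sand (t δ x : ℝ) : ℝ := max 0 (min 1 ((t + δ - x)/δ))

lemma sand_continuous (t δ : ℝ) : Continuous (sand t δ) :=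
  continuous_const.max (continuous_const.min
    ((continuous_const.sub continuous_id).div_const δ))

lemma sand_lipschitz {t δ : ℝ} (hδ : 0 < δ) :
    ∀ x y, |sand t δ x - sand t δ y| ≤ (1/δ) * |x - y| := by
  intro x y
  have h1 : |sand t δ x - sand t δ y| ≤ |min 1 ((t + δ - x)/δ) - min 1 ((t + δ - y)/δ)| := by
    simpa [sand, max_comm] using
      abs_max_sub_max_le_abs (min 1 ((t + δ - x)/δ)) (min 1 ((t + δ - y)/δ)) 0
  have h2 : |min 1 ((t + δ - x)/δ) - min 1 ((t + δ - y)/δ)| ≤ |(t + δ - x)/δ - (t + δ - y)/δ| := by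
    have := abs_min_sub_min_le_max (1:ℝ) ((t + δ - x)/δ) 1 ((t + δ - y)/δ)
    simpa using this
  have h3 : |(t + δ - x)/δ - (t + δ - y)/δ| = (1/δ) * |x - y| := by
    rw [div_sub_div_same]
    have : (t + δ - x - (t + δ - y)) = (y - x) := by ring
    rw [this, abs_div, abs_of_pos hδ, abs_sub_comm]
    ring
  calc |sand t δ x - sand t δ y| ≤ _ := h1
    _ ≤ _ := h2
    _ = _ := h3

lemma sand_mem_Icc {t δ : ℝ} (x : ℝ) : 0 ≤ sand t δ x ∧ sand t δ x ≤ 1 :=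
  ⟨le_max_left _ _, max_le zero_le_one (min_le_left _ _)⟩

lemma indicator_le_sand {t δ : ℝ} (hδ : 0 < δ) (x : ℝ) :
    (Iic t).indicator (1 : ℝ → ℝ) x ≤ sand t δ x := by
  by_cases hx : x ∈ Iic t
  · rw [indicator_of_mem hx]
    have : (1:ℝ) ≤ (t + δ - x)/δ := by
      rw [le_div_iff₀ hδ]
      simp only [mem_Iic] at hx
      linarith
    simp only [Pi.one_apply, sand, min_eq_left this]
    exact le_max_right _ _
  · rw [indicator_of_notMem hx]
    exact (sand_mem_Icc x).1

lemma sand_le_indicator {t δ : ℝ} (hδ : 0 < δ) (x : ℝ) :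
    sand t δ x ≤ (Iic (t + δ)).indicator (1 : ℝ → ℝ) x := by
  by_cases hx : x ∈ Iic (t + δ)
  · rw [indicator_of_mem hx]
    exact (sand_mem_Icc x).2
  · rw [indicator_of_notMem hx]
    simp only [mem_Iic, not_le] at hx
    have : (t + δ - x)/δ ≤ 0 := div_nonpos_of_nonpos_of_nonneg (by linarith) hδ.le
    simp only [sand]
    rw [max_eq_left (le_trans (min_le_right _ _) this)]

lemma sand_integrable {t δ : ℝ} (m : Measure ℝ) [IsProbabilityMeasure m] :
    Integrable (sand t δ) m := by
  refine Integrable.mono' (integrable_const 1) (sand_continuous t δ).aestronglyMeasurable ?_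
  refine Eventually.of_forall (fun x => ?_)
  rw [Real.norm_eq_abs, abs_of_nonneg (sand_mem_Icc x).1]
  exact (sand_mem_Icc x).2

lemma integral_sand_le (t : ℝ) {δ : ℝ} (hδ : 0 < δ) (m : Measure ℝ) [IsProbabilityMeasure m] :
    cdf m t ≤ ∫ x, sand t δ x ∂m ∧ ∫ x, sand t δ x ∂m ≤ cdf m (t + δ) := by
  have hind : ∀ s : ℝ, Integrable ((Iic s).indicator (1 : ℝ → ℝ)) m :=
    fun s => (integrable_const 1).indicator measurableSet_Iic
  constructor
  · rw [cdf_eq_real, ← integral_indicator_one measurableSet_Iic]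
    exact integral_mono (hind t) (sand_integrable m) (indicator_le_sand hδ)
  · rw [cdf_eq_real, ← integral_indicator_one measurableSet_Iic]
    exact integral_mono (sand_integrable m) (hind (t + δ)) (sand_le_indicator hδ)

/-- From convergence of integrals of Lipschitz bounded functions to cdf convergence at
continuity points. -/
lemma cdf_tendsto_of_integral_tendsto {ρs : ℕ → Measure ℝ} {ρ : Measure ℝ}
    [∀ n, IsProbabilityMeasure (ρs n)] [IsProbabilityMeasure ρ]
    (h : ∀ g : ℝ → ℝ, Continuous g → (∃ K : ℝ, ∀ x y, |g x - g y| ≤ K * |x - y|) →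
      (∃ C : ℝ, ∀ x, |g x| ≤ C) →
      Tendsto (fun n => ∫ x, g x ∂(ρs n)) atTop (𝓝 (∫ x, g x ∂ρ)))
    (t : ℝ) (ht : ContinuousAt (cdf ρ) t) :
    Tendsto (fun n => cdf (ρs n) t) atTop (𝓝 (cdf ρ t)) := by
  rw [Metric.tendsto_atTop]
  intro ε hε
  obtain ⟨δ, hδ, hδ'⟩ := Metric.continuousAt_iff.mp ht (ε/4) (by linarith)
  set δ2 := δ/2 with hδ2def
  have hδ2 : 0 < δ2 := by positivity
  have hsand : ∀ s : ℝ, Tendsto (fun n => ∫ x, sand s δ2 x ∂(ρs n)) atTop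
      (𝓝 (∫ x, sand s δ2 x ∂ρ)) := by
    intro s
    refine h _ (sand_continuous s δ2) ⟨1/δ2, sand_lipschitz hδ2⟩ ⟨1, fun x => ?_⟩
    rw [abs_of_nonneg (sand_mem_Icc x).1]; exact (sand_mem_Icc x).2
  have hup := hsand t
  have hlo := hsand (t - δ2)
  rw [Metric.tendsto_atTop] at hup hlo
  obtain ⟨N1, hN1⟩ := hup (ε/4) (by linarith)
  obtain ⟨N2, hN2⟩ := hlo (ε/4) (by linarith)
  refine ⟨max N1 N2, fun n hn => ?_⟩
  have h1 := hN1 n (le_trans (le_max_left _ _) hn)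
  have h2 := hN2 n (le_trans (le_max_right _ _) hn)
  rw [Real.dist_eq] at h1 h2 ⊢
  -- upper bound: cdfₙ t ≤ ∫ sand t δ2 dρₙ ≤ ∫ sand t δ2 dρ + ε/4 ≤ cdf ρ (t+δ2) + ε/4
  have hu1 : cdf (ρs n) t ≤ ∫ x, sand t δ2 x ∂(ρs n) := (integral_sand_le t hδ2 (ρs n)).1
  have hu2 : ∫ x, sand t δ2 x ∂ρ ≤ cdf ρ (t + δ2) := (integral_sand_le t hδ2 ρ).2
  have hu3 : cdf ρ (t + δ2) < cdf ρ t + ε/4 := by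
    have : dist (t + δ2) t < δ := by
      rw [Real.dist_eq]; rw [abs_of_nonneg (by linarith)]
      simp only [hδ2def]; linarith
    have := hδ' this
    rw [Real.dist_eq] at this
    have := abs_lt.mp this
    linarith [this.1, this.2]
  -- lower bound
  have hl1 : ∫ x, sand (t - δ2) δ2 x ∂(ρs n) ≤ cdf (ρs n) t := by
    have := (integral_sand_le (t - δ2) hδ2 (ρs n)).2
    rwa [sub_add_cancel] at this
  have hl2 : cdf ρ (t - δ2) ≤ ∫ x, sand (t - δ2) δ2 x ∂ρ := (integral_sand_le (t - δ2) hδ2 ρ).1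
  have hl3 : cdf ρ t - ε/4 < cdf ρ (t - δ2) := by
    have : dist (t - δ2) t < δ := by
      rw [Real.dist_eq]; rw [abs_of_nonpos (by linarith)]
      simp only [hδ2def]; linarith
    have := hδ' this
    rw [Real.dist_eq] at this
    have := abs_lt.mp this
    linarith [this.1, this.2]
  have hb1 := abs_lt.mp h1
  have hb2 := abs_lt.mp h2
  rw [abs_lt]
  constructor <;> nlinarith [hb1.1, hb1.2, hb2.1, hb2.2]

lemma coupling_prob {π : Measure (ℝ × ℝ)} {μ' : Measure ℝ} [IsProbabilityMeasure μ']
    (h : π.map Prod.fst = μ') : IsProbabilityMeasure π := by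
  constructor
  have : π.map Prod.fst univ = 1 := by rw [h]; exact measure_univ
  rwa [Measure.map_apply measurable_fst MeasurableSet.univ, preimage_univ] at this

lemma cost_measurable {p : ℝ} (hp : 0 ≤ p) :
    Measurable (fun q : ℝ × ℝ => ENNReal.ofReal (|q.1 - q.2| ^ p)) := by
  apply Measurable.ennreal_ofReal
  exact (Real.continuous_rpow_const hp).measurable.comp
    ((measurable_fst.sub measurable_snd).abs)

/-- The quantile coupling bounds Wp. -/
lemma Wp_le_quantile (p : ℝ) (hp : 0 < p) (μ' ν' : Measure ℝ)
    [IsProbabilityMeasure μ'] [IsProbabilityMeasure ν'] :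
    Wp p μ' ν' ≤ (∫⁻ u in Ioo (0:ℝ) 1, ENNReal.ofReal (|Q μ' u - Q ν' u| ^ p)) ^ (1/p) := by
  set m := volume.restrict (Ioo (0:ℝ) 1)
  set φ : ℝ → ℝ × ℝ := fun u => (Q μ' u, Q ν' u) with hφdef
  have hφ : AEMeasurable φ m := (Q_aemeasurable (ρ := μ')).prodMk (Q_aemeasurable (ρ := ν'))
  set π := m.map φ
  have h1 : π.map Prod.fst = μ' := by
    rw [AEMeasurable.map_map_of_aemeasurable measurable_fst.aemeasurable hφ]
    exact map_Q
  have h2 : π.map Prod.snd = ν' := by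
    rw [AEMeasurable.map_map_of_aemeasurable measurable_snd.aemeasurable hφ]
    exact map_Q
  have hval : (∫⁻ q, ENNReal.ofReal (|q.1 - q.2| ^ p) ∂π) =
      ∫⁻ u, ENNReal.ofReal (|Q μ' u - Q ν' u| ^ p) ∂m :=
    lintegral_map' (cost_measurable hp.le).aemeasurable hφ
  calc Wp p μ' ν' ≤ (∫⁻ q, ENNReal.ofReal (|q.1 - q.2| ^ p) ∂π) ^ (1/p) := by
        refine iInf_le_of_le π ?_
        refine iInf_le_of_le h1 ?_
        exact iInf_le _ h2
    _ = _ := by rw [hval]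

/-- Wp is monotone in p on probability spaces. -/
lemma Wp_mono_exponent {p q : ℝ} (hp : 0 < p) (hpq : p ≤ q) (μ' ν' : Measure ℝ)
    [IsProbabilityMeasure μ'] : Wp p μ' ν' ≤ Wp q μ' ν' := by
  refine le_iInf fun π => le_iInf fun h1 => le_iInf fun h2 => ?_
  have : IsProbabilityMeasure π := coupling_prob h1
  have key : (∫⁻ qq, ENNReal.ofReal (|qq.1 - qq.2| ^ p) ∂π) ^ (1/p) ≤
      (∫⁻ qq, ENNReal.ofReal (|qq.1 - qq.2| ^ q) ∂π) ^ (1/q) := by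
    have hrw : ∀ r : ℝ, 0 < r → (fun qq : ℝ × ℝ => ENNReal.ofReal (|qq.1 - qq.2| ^ r)) =
        (fun qq : ℝ × ℝ => (‖qq.1 - qq.2‖₊ : ℝ≥0∞) ^ r) := by
      intro r hr
      funext qq
      rw [← ENNReal.ofReal_rpow_of_nonneg (abs_nonneg _) hr.le]
      rw [← Real.enorm_eq_ofReal (abs_nonneg _), Real.enorm_abs]; rfl
    have heq : ∀ r : ℝ, 0 < r → (∫⁻ qq, ENNReal.ofReal (|qq.1 - qq.2| ^ r) ∂π) ^ (1/r) =
        eLpNorm' (fun qq : ℝ × ℝ => qq.1 - qq.2) r π := by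
      intro r hr
      rw [eLpNorm', hrw r hr]; rfl
    rw [heq p hp, heq q (lt_of_lt_of_le hp hpq)]
    exact eLpNorm'_le_eLpNorm'_of_exponent_le hp hpq π
      ((measurable_fst.sub measurable_snd).aestronglyMeasurable)
  calc Wp p μ' ν' ≤ (∫⁻ qq, ENNReal.ofReal (|qq.1 - qq.2| ^ p) ∂π) ^ (1/p) := by
        refine iInf_le_of_le π ?_; refine iInf_le_of_le h1 ?_; exact iInf_le _ h2
    _ ≤ _ := key

lemma abs_Q_le {μ ν σ : Measure ℝ} [IsProbabilityMeasure μ] [IsProbabilityMeasure ν]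
    [IsProbabilityMeasure σ] (h1 : StOrder μ σ) (h2 : StOrder σ ν) {u : ℝ}
    (hu : u ∈ Ioo (0:ℝ) 1) : |Q σ u| ≤ |Q μ u| + |Q ν u| := by
  have l1 := Q_le_Q_of_st h1 hu
  have l2 := Q_le_Q_of_st h2 hu
  have := abs_nonneg (Q μ u)
  have := abs_nonneg (Q ν u)
  have := neg_abs_le (Q μ u)
  have := le_abs_self (Q ν u)
  rw [abs_le]; constructor <;> linarith

lemma W2_tendsto_of_Q_tendsto {μ ν : Measure ℝ} {ρs : ℕ → Measure ℝ} {ρ : Measure ℝ}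
    [IsProbabilityMeasure μ] [IsProbabilityMeasure ν] [∀ n, IsProbabilityMeasure (ρs n)]
    [IsProbabilityMeasure ρ]
    (hμ2 : Integrable (fun x : ℝ => x ^ 2) μ) (hν2 : Integrable (fun x : ℝ => x ^ 2) ν)
    (hQs : ∀ n, ∀ u ∈ Ioo (0:ℝ) 1, |Q (ρs n) u| ≤ |Q μ u| + |Q ν u|)
    (hQρ : ∀ u ∈ Ioo (0:ℝ) 1, |Q ρ u| ≤ |Q μ u| + |Q ν u|)
    (hae : ∀ᵐ u ∂(volume.restrict (Ioo (0:ℝ) 1)),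
      Tendsto (fun n => Q (ρs n) u) atTop (𝓝 (Q ρ u))) :
    Tendsto (fun n => Wp 2 (ρs n) ρ) atTop (𝓝 0) := by
  classical
  set m := volume.restrict (Ioo (0:ℝ) 1) with hm
  set F : ℕ → ℝ → ℝ≥0∞ := fun n u => ENNReal.ofReal (|Q (ρs n) u - Q ρ u| ^ (2:ℝ)) with hF
  set g : ℝ → ℝ≥0∞ := fun u =>
    8 * ENNReal.ofReal ((Q μ u) ^ 2) + 8 * ENNReal.ofReal ((Q ν u) ^ 2) with hg
  have hre : ∀ d : ℝ, |d| ^ (2:ℝ) = d ^ 2 := by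
    intro d
    rw [show (2:ℝ) = ((2:ℕ):ℝ) by norm_num, Real.rpow_natCast, sq_abs]
  have hFmeas : ∀ n, AEMeasurable (F n) m := by
    intro n
    apply AEMeasurable.ennreal_ofReal
    exact ((Real.continuous_rpow_const (by norm_num)).comp continuous_abs).measurable.comp_aemeasurable
      ((Q_aemeasurable (ρ := ρs n)).sub (Q_aemeasurable (ρ := ρ)))
  have h_bound : ∀ n, F n ≤ᵐ[m] g := by
    intro n
    filter_upwards [ae_restrict_mem measurableSet_Ioo] with u hu
    have hb1 := hQs n u hu
    have hb2 := hQρ u hu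
    have habs : |Q (ρs n) u - Q ρ u| ≤ 2 * (|Q μ u| + |Q ν u|) := by
      calc |Q (ρs n) u - Q ρ u| ≤ |Q (ρs n) u| + |Q ρ u| := abs_sub _ _
        _ ≤ 2 * (|Q μ u| + |Q ν u|) := by linarith
    have hsq : |Q (ρs n) u - Q ρ u| ^ (2:ℝ) ≤ 8 * (Q μ u)^2 + 8 * (Q ν u)^2 := by
      rw [hre]
      have h8 : (2 * (|Q μ u| + |Q ν u|))^2 ≤ 8 * (Q μ u)^2 + 8 * (Q ν u)^2 := by
        nlinarith [sq_abs (Q μ u), sq_abs (Q ν u), sq_nonneg (|Q μ u| - |Q ν u|),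
          abs_nonneg (Q μ u), abs_nonneg (Q ν u)]
      calc (Q (ρs n) u - Q ρ u) ^ 2 = |Q (ρs n) u - Q ρ u| ^ 2 := (sq_abs _).symm
        _ ≤ (2 * (|Q μ u| + |Q ν u|))^2 :=
            pow_le_pow_left₀ (abs_nonneg _) habs 2
        _ ≤ _ := h8
    calc F n u ≤ ENNReal.ofReal (8 * (Q μ u)^2 + 8 * (Q ν u)^2) := ENNReal.ofReal_le_ofReal hsq
      _ = ENNReal.ofReal (8 * (Q μ u)^2) + ENNReal.ofReal (8 * (Q ν u)^2) :=
          ENNReal.ofReal_add (by positivity) (by positivity)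
      _ = g u := by
          rw [ENNReal.ofReal_mul (by norm_num), ENNReal.ofReal_mul (by norm_num)]
          norm_num [hg]
  have h_fin : ∫⁻ u, g u ∂m ≠ ⊤ := by
    have hQμm : AEMeasurable (fun u => ENNReal.ofReal ((Q μ u) ^ 2)) m :=
      ((Q_aemeasurable (ρ := μ)).pow_const 2).ennreal_ofReal
    have hQνm : AEMeasurable (fun u => ENNReal.ofReal ((Q ν u) ^ 2)) m :=
      ((Q_aemeasurable (ρ := ν)).pow_const 2).ennreal_ofReal
    rw [hg]
    rw [lintegral_add_left' (hQμm.const_mul 8)]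
    rw [lintegral_const_mul' _ _ (by norm_num), lintegral_const_mul' _ _ (by norm_num)]
    have f1 := lintegral_ofReal_sq_lt_top (ρ := μ) hμ2
    have f2 := lintegral_ofReal_sq_lt_top (ρ := ν) hν2
    rw [← hm] at f1 f2
    exact ENNReal.add_ne_top.mpr
      ⟨ENNReal.mul_ne_top (by norm_num) f1.ne, ENNReal.mul_ne_top (by norm_num) f2.ne⟩
  have h_lim : ∀ᵐ u ∂m, Tendsto (fun n => F n u) atTop (𝓝 0) := by
    filter_upwards [hae] with u hu
    have : Tendsto (fun n => |Q (ρs n) u - Q ρ u| ^ (2:ℝ)) atTop (𝓝 (|Q ρ u - Q ρ u| ^ (2:ℝ))) := by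
      apply (Real.continuous_rpow_const (by norm_num)).continuousAt.tendsto.comp
      exact (continuous_abs.continuousAt.tendsto.comp ((hu.sub_const (Q ρ u))))
    have h0 : |Q ρ u - Q ρ u| ^ (2:ℝ) = 0 := by
      simp [Real.zero_rpow (by norm_num : (2:ℝ) ≠ 0)]
    rw [h0] at this
    have h2 := ENNReal.continuous_ofReal.continuousAt.tendsto.comp this
    rw [Function.comp_def] at h2
    simpa only [ENNReal.ofReal_zero] using h2
  have hL : Tendsto (fun n => ∫⁻ u, F n u ∂m) atTop (𝓝 0) := by
    have := tendsto_lintegral_of_dominated_convergence' g hFmeas h_bound h_fin h_lim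
    simpa using this
  have hRt : Tendsto (fun n => (∫⁻ u, F n u ∂m) ^ (1/(2:ℝ))) atTop (𝓝 0) := by
    have hc := (ENNReal.continuous_rpow_const (y := 1/(2:ℝ))).continuousAt.tendsto.comp hL
    have : ((0:ℝ≥0∞)) ^ (1/(2:ℝ)) = 0 := ENNReal.zero_rpow_of_pos (by norm_num)
    rwa [Function.comp_def, this] at hc
  refine tendsto_of_tendsto_of_tendsto_of_le_of_le tendsto_const_nhds hRt
    (fun n => zero_le) (fun n => ?_)
  exact Wp_le_quantile 2 two_pos (ρs n) ρ

lemma integral_tendsto_of_W1 {ρs : ℕ → Measure ℝ} {ρ : Measure ℝ}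
    [∀ n, IsProbabilityMeasure (ρs n)] [IsProbabilityMeasure ρ]
    (hW1 : Tendsto (fun n => Wp 1 (ρs n) ρ) atTop (𝓝 0))
    {g : ℝ → ℝ} (hg : Continuous g) {K : ℝ} (hK : ∀ x y, |g x - g y| ≤ K * |x - y|)
    {C : ℝ} (hC : ∀ x, |g x| ≤ C) :
    Tendsto (fun n => ∫ x, g x ∂(ρs n)) atTop (𝓝 (∫ x, g x ∂ρ)) := by
  rw [Metric.tendsto_atTop]
  intro ε hε
  set K' := max K 1 with hK'def
  have hK' : 0 < K' := lt_of_lt_of_le one_pos (le_max_right _ _)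
  have hKK : K ≤ K' := le_max_left _ _
  have hpos : (0:ℝ≥0∞) < ENNReal.ofReal (ε/(2*K')) := ENNReal.ofReal_pos.mpr (by positivity)
  have hev : ∀ᶠ n in atTop, Wp 1 (ρs n) ρ < ENNReal.ofReal (ε/(2*K')) :=
    hW1.eventually_lt_const hpos
  rw [eventually_atTop] at hev
  obtain ⟨N, hN⟩ := hev
  refine ⟨N, fun n hn => ?_⟩
  have hlt := hN n hn
  rw [Wp] at hlt
  obtain ⟨π, hπ⟩ := iInf_lt_iff.mp hlt
  obtain ⟨h1, hπ⟩ := iInf_lt_iff.mp hπ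
  obtain ⟨h2, hπ⟩ := iInf_lt_iff.mp hπ
  haveI := coupling_prob h1
  have hsimp : ∀ q : ℝ × ℝ, |q.1 - q.2| ^ (1:ℝ) = |q.1 - q.2| := fun q => Real.rpow_one _
  simp only [hsimp, one_div_one, ENNReal.rpow_one] at hπ
  -- integrability
  have hint1 : Integrable (fun q : ℝ × ℝ => g q.1) π := by
    refine Integrable.mono' (integrable_const C)
      ((hg.comp continuous_fst).aestronglyMeasurable) ?_
    exact Eventually.of_forall fun q => (Real.norm_eq_abs _).trans_le (hC q.1)
  have hint2 : Integrable (fun q : ℝ × ℝ => g q.2) π := by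
    refine Integrable.mono' (integrable_const C)
      ((hg.comp continuous_snd).aestronglyMeasurable) ?_
    exact Eventually.of_forall fun q => (Real.norm_eq_abs _).trans_le (hC q.2)
  have heq1 : ∫ x, g x ∂(ρs n) = ∫ q : ℝ × ℝ, g q.1 ∂π := by
    rw [← h1, integral_map measurable_fst.aemeasurable hg.aestronglyMeasurable]
  have heq2 : ∫ x, g x ∂ρ = ∫ q : ℝ × ℝ, g q.2 ∂π := by
    rw [← h2, integral_map measurable_snd.aemeasurable hg.aestronglyMeasurable]
  rw [Real.dist_eq, heq1, heq2, ← integral_sub hint1 hint2]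
  -- bound
  set L := ∫⁻ q : ℝ × ℝ, ENNReal.ofReal (|g q.1 - g q.2|) ∂π with hLdef
  have habs : |∫ q : ℝ × ℝ, (g q.1 - g q.2) ∂π| ≤ L.toReal := by
    have hmeas : AEStronglyMeasurable (fun q : ℝ × ℝ => |g q.1 - g q.2|) π :=
      (((hg.comp continuous_fst).sub (hg.comp continuous_snd)).abs).aestronglyMeasurable
    have heqL : ∫ q : ℝ × ℝ, |g q.1 - g q.2| ∂π = L.toReal := by
      rw [hLdef, integral_eq_lintegral_of_nonneg_ae (Eventually.of_forall fun q => abs_nonneg _)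
        hmeas]
    calc |∫ q : ℝ × ℝ, (g q.1 - g q.2) ∂π| ≤ ∫ q : ℝ × ℝ, |g q.1 - g q.2| ∂π := by
          simpa [Real.norm_eq_abs] using
            norm_integral_le_integral_norm (fun q : ℝ × ℝ => g q.1 - g q.2) (μ := π)
      _ = L.toReal := heqL
  have hLle : L ≤ ENNReal.ofReal K' * ∫⁻ q : ℝ × ℝ, ENNReal.ofReal (|q.1 - q.2|) ∂π := by
    rw [← lintegral_const_mul' _ _ ENNReal.ofReal_ne_top]
    refine lintegral_mono fun q => ?_
    rw [← ENNReal.ofReal_mul hK'.le]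
    refine ENNReal.ofReal_le_ofReal ?_
    exact (hK q.1 q.2).trans (mul_le_mul_of_nonneg_right hKK (abs_nonneg _) |>.trans
      (le_of_eq rfl))
  have hfin : ENNReal.ofReal K' * ∫⁻ q : ℝ × ℝ, ENNReal.ofReal (|q.1 - q.2|) ∂π ≤
      ENNReal.ofReal K' * ENNReal.ofReal (ε/(2*K')) := by
    gcongr
  have hfin2 : ENNReal.ofReal K' * ENNReal.ofReal (ε/(2*K')) = ENNReal.ofReal (ε/2) := by
    rw [← ENNReal.ofReal_mul hK'.le]
    congr 1
    field_simp
  have hLfin : L ≤ ENNReal.ofReal (ε/2) := le_trans hLle (hfin.trans_eq hfin2)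
  have : L.toReal ≤ ε/2 := by
    calc L.toReal ≤ (ENNReal.ofReal (ε/2)).toReal :=
          ENNReal.toReal_mono ENNReal.ofReal_ne_top hLfin
      _ = ε/2 := ENNReal.toReal_ofReal (by positivity)
  calc |∫ q : ℝ × ℝ, (g q.1 - g q.2) ∂π| ≤ L.toReal := habs
    _ ≤ ε/2 := this
    _ < ε := by linarith

end OICE

/-- On an order interval `[μ,ν] ⊆ 𝒫₂(ℝ)` of the stochastic order, for a
sequence `ρₙ ∈ [μ,ν]` and `ρ ∈ [μ,ν]`, the following are equivalent:
(i) `𝒲₂(ρₙ,ρ) → 0`; (ii) `𝒲_p(ρₙ,ρ) → 0` for all `1 ≤ p < 2`; (iii) `ρₙ → ρ` weakly. -/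
theorem order_interval_convergence_equiv (μ ν : Measure ℝ) (hμ : μ ∈ P2) (hν : ν ∈ P2)
    (hμν : StOrder μ ν) (ρs : ℕ → Measure ℝ) (ρ : Measure ℝ)
    (hρs : ∀ n, ρs n ∈ P2 ∧ StOrder μ (ρs n) ∧ StOrder (ρs n) ν)
    (hρ : ρ ∈ P2 ∧ StOrder μ ρ ∧ StOrder ρ ν) :
    (W2Tendsto ρs ρ ↔
      ∀ p : ℝ, 1 ≤ p → p < 2 → Tendsto (fun n => Wp p (ρs n) ρ) atTop (nhds 0)) ∧
    (W2Tendsto ρs ρ ↔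
      ∀ f : ℝ → ℝ, Continuous f → (∃ C : ℝ, ∀ x, |f x| ≤ C) →
        Tendsto (fun n => ∫ x, f x ∂(ρs n)) atTop (nhds (∫ x, f x ∂ρ))) := by
  obtain ⟨⟨hρp, hρi⟩, hμρ, hρν⟩ := hρ
  haveI : IsProbabilityMeasure μ := hμ.1
  haveI : IsProbabilityMeasure ν := hν.1
  haveI : IsProbabilityMeasure ρ := hρp
  haveI : ∀ n, IsProbabilityMeasure (ρs n) := fun n => (hρs n).1.1
  set condD : Prop :=
    ∀ t, ContinuousAt (⇑(ProbabilityTheory.cdf ρ)) t →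
      Tendsto (fun n => ProbabilityTheory.cdf (ρs n) t) atTop (nhds (ProbabilityTheory.cdf ρ t))
    with hcondD
  have hDA : condD → W2Tendsto ρs ρ := by
    intro hD
    have hae := OICE.Q_tendsto_ae hD
    show Tendsto (fun n => W2 (ρs n) ρ) atTop (nhds 0)
    simp only [W2]
    exact OICE.W2_tendsto_of_Q_tendsto hμ.2 hν.2
      (fun n u hu => OICE.abs_Q_le (hρs n).2.1 (hρs n).2.2 hu)
      (fun u hu => OICE.abs_Q_le hμρ hρν hu) hae
  have hAB : W2Tendsto ρs ρ →
      ∀ p : ℝ, 1 ≤ p → p < 2 → Tendsto (fun n => Wp p (ρs n) ρ) atTop (nhds 0) := by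
    intro hA p hp1 hp2
    have hA' : Tendsto (fun n => Wp 2 (ρs n) ρ) atTop (nhds 0) := hA
    refine tendsto_of_tendsto_of_tendsto_of_le_of_le tendsto_const_nhds hA'
      (fun n => zero_le) (fun n => ?_)
    exact OICE.Wp_mono_exponent (lt_of_lt_of_le one_pos hp1) hp2.le (ρs n) ρ
  have hBD : (∀ p : ℝ, 1 ≤ p → p < 2 → Tendsto (fun n => Wp p (ρs n) ρ) atTop (nhds 0)) →
      condD := by
    intro hB
    have hW1 := hB 1 le_rfl one_lt_two
    exact OICE.cdf_tendsto_of_integral_tendsto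
      (fun g hg hKex hCex => by
        obtain ⟨K, hK⟩ := hKex
        obtain ⟨C, hC⟩ := hCex
        exact OICE.integral_tendsto_of_W1 hW1 hg hK hC)
  have hDC : condD → ∀ f : ℝ → ℝ, Continuous f → (∃ C : ℝ, ∀ x, |f x| ≤ C) →
      Tendsto (fun n => ∫ x, f x ∂(ρs n)) atTop (nhds (∫ x, f x ∂ρ)) := by
    intro hD f hf hCex
    obtain ⟨C, hC⟩ := hCex
    exact OICE.integral_tendsto_of_Q_tendsto (OICE.Q_tendsto_ae hD) hf hC
  have hCD : (∀ f : ℝ → ℝ, Continuous f → (∃ C : ℝ, ∀ x, |f x| ≤ C) →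
      Tendsto (fun n => ∫ x, f x ∂(ρs n)) atTop (nhds (∫ x, f x ∂ρ))) → condD := by
    intro hC
    exact OICE.cdf_tendsto_of_integral_tendsto (fun g hg _ hbd => hC g hg hbd)
  constructor
  · exact ⟨hAB, fun hB => hDA (hBD hB)⟩
  · exact ⟨fun hA => hDC (hBD (hAB hA)), fun hC => hDA (hCD hC)⟩

end
end

section
/- For any probability measure μ ∈ 𝒫₂(ℝ) and any nonempty open set U ⊂ 𝒫₂(ℝ) in the 2-Wasserstein topology, there exists ν ∈ U such that μ and ν are order unrelated with respect to the stochastic order: neither μ ≤_st ν nor ν ≤_st μ holds. In particular, every order interval in 𝒫₂(ℝ) has empty interior. -/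
open MeasureTheory Filter Set ENNReal

noncomputable section

/-! ### Auxiliary material -/

/-- bounded continuous functions are integrable w.r.t. finite measures -/
lemma my_integrable_of_bdd {f : ℝ → ℝ} (hf : Continuous f) {C : ℝ} (hC : ∀ x, |f x| ≤ C)
    (μ : Measure ℝ) [IsFiniteMeasure μ] : Integrable f μ := by
  refine Integrable.mono' (integrable_const C) hf.aestronglyMeasurable ?_
  exact Eventually.of_forall fun x => (Real.norm_eq_abs _ ▸ hC x)

def mycut (c : ℝ) (x : ℝ) : ℝ := min 1 (max 0 (x - c))

lemma mycut_mono (c : ℝ) : Monotone (mycut c) := by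
  intro a b hab; unfold mycut; gcongr

lemma mycut_cont (c : ℝ) : Continuous (mycut c) := by
  unfold mycut; fun_prop

lemma mycut_nonneg (c x : ℝ) : 0 ≤ mycut c x := by
  unfold mycut; positivity

lemma mycut_le_one (c x : ℝ) : mycut c x ≤ 1 := min_le_left _ _

lemma mycut_abs_le (c x : ℝ) : |mycut c x| ≤ 1 := by
  rw [abs_le]; exact ⟨by linarith [mycut_nonneg c x], mycut_le_one c x⟩

lemma mycut_eq_zero {c x : ℝ} (h : x ≤ c) : mycut c x = 0 := by
  unfold mycut
  rw [max_eq_left (by linarith), min_eq_right zero_le_one]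

lemma mycut_eq_one {c x : ℝ} (h : c + 1 ≤ x) : mycut c x = 1 := by
  unfold mycut
  rw [max_eq_right (by linarith), min_eq_left (by linarith)]

lemma mycut_le_indicator (c x : ℝ) : mycut c x ≤ (Set.Ioi c).indicator (fun _ => (1:ℝ)) x := by
  by_cases h : x ∈ Set.Ioi c
  · rw [Set.indicator_of_mem h]; exact mycut_le_one c x
  · rw [Set.indicator_of_notMem h]
    rw [mycut_eq_zero (by simpa [Set.mem_Ioi, not_lt] using h)]

lemma indicator_le_mycut (c x : ℝ) : (Set.Ici (c+1)).indicator (fun _ => (1:ℝ)) x ≤ mycut c x := by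
  by_cases h : x ∈ Set.Ici (c+1)
  · rw [Set.indicator_of_mem h, mycut_eq_one (by exact h)]
  · rw [Set.indicator_of_notMem h]; exact mycut_nonneg c x

lemma tailset_meas (t : ℝ) : MeasurableSet {y : ℝ | t ≤ |y|} :=
  (isClosed_le continuous_const _root_.continuous_abs).measurableSet

lemma tail_tendsto (μ : Measure ℝ) (hint : Integrable (fun x : ℝ => x ^ 2) μ) :
    Tendsto (fun n : ℕ => ∫ x, ({y : ℝ | (n : ℝ) ≤ |y|}).indicator (fun y => y ^ 2) x ∂μ)
      atTop (nhds 0) := by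
  have h0 : (0:ℝ) = ∫ x, (0:ℝ) ∂μ := by simp
  rw [h0]
  refine tendsto_integral_filter_of_dominated_convergence (fun x => x ^ 2)
    (Eventually.of_forall fun n => ?_) (Eventually.of_forall fun n => ?_) hint
    (Eventually.of_forall fun x => ?_)
  · exact (hint.aestronglyMeasurable.indicator (tailset_meas _))
  · refine Eventually.of_forall fun x => ?_
    rw [Real.norm_eq_abs]
    by_cases h : x ∈ {y : ℝ | (n : ℝ) ≤ |y|}
    · rw [Set.indicator_of_mem h]; rw [abs_of_nonneg (sq_nonneg x)]
    · rw [Set.indicator_of_notMem h]; simpa using sq_nonneg x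
  · obtain ⟨N, hN⟩ := exists_nat_gt |x|
    refine tendsto_const_nhds.congr' ?_
    filter_upwards [eventually_ge_atTop N] with n hn
    rw [Set.indicator_of_notMem]
    simp only [Set.mem_setOf_eq, not_le]
    calc |x| < N := hN
    _ ≤ n := by exact_mod_cast hn

lemma cheb (μ : Measure ℝ) [IsFiniteMeasure μ] (hint : Integrable (fun x : ℝ => x ^ 2) μ)
    {a : ℝ} (ha : 0 < a) :
    (μ {y : ℝ | a ≤ |y|}).toReal * a ^ 2
      ≤ ∫ x, ({y : ℝ | a ≤ |y|}).indicator (fun y => y ^ 2) x ∂μ := by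
  rw [integral_indicator (tailset_meas a)]
  have h1 : ∫ x in {y : ℝ | a ≤ |y|}, a ^ 2 ∂μ ≤ ∫ x in {y : ℝ | a ≤ |y|}, x ^ 2 ∂μ := by
    refine setIntegral_mono_on (integrableOn_const (measure_ne_top _ _))
      (hint.integrableOn) (tailset_meas a) fun x hx => ?_
    have : a ≤ |x| := hx
    calc a ^ 2 ≤ |x| ^ 2 := by nlinarith [abs_nonneg x]
    _ = x ^ 2 := sq_abs x
  rw [← measureReal_def]
  simpa [setIntegral_const, smul_eq_mul] using h1

def mymix (ν₀ : Measure ℝ) (ε M : ℝ) : Measure ℝ :=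
  ENNReal.ofReal (1 - 2 * ε) • ν₀ + ENNReal.ofReal ε • Measure.dirac (-M)
    + ENNReal.ofReal ε • Measure.dirac M

lemma mymix_prob (ν₀ : Measure ℝ) [IsProbabilityMeasure ν₀] {ε : ℝ} (M : ℝ)
    (h1 : 0 ≤ ε) (h2 : 2 * ε ≤ 1) : IsProbabilityMeasure (mymix ν₀ ε M) := by
  constructor
  simp only [mymix, Measure.coe_add, Measure.coe_smul, Pi.add_apply, Pi.smul_apply,
    measure_univ, Measure.dirac_apply_of_mem (Set.mem_univ _), smul_eq_mul, mul_one]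
  rw [← ENNReal.ofReal_add (by linarith) h1, ← ENNReal.ofReal_add (by linarith) h1]
  rw [show 1 - 2 * ε + ε + ε = 1 by ring, ENNReal.ofReal_one]

instance mymix_finite (ν₀ : Measure ℝ) [IsFiniteMeasure ν₀] (ε M : ℝ) :
    IsFiniteMeasure (mymix ν₀ ε M) := by
  unfold mymix
  have h1 : IsFiniteMeasure (ENNReal.ofReal (1 - 2*ε) • ν₀) :=
    ⟨by rw [Measure.smul_apply, smul_eq_mul]; exact ENNReal.mul_lt_top ofReal_lt_top (measure_lt_top _ _)⟩
  have h2 : IsFiniteMeasure (ENNReal.ofReal ε • Measure.dirac (-M)) :=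
    ⟨by rw [Measure.smul_apply, smul_eq_mul]; exact ENNReal.mul_lt_top ofReal_lt_top (measure_lt_top _ _)⟩
  have h3 : IsFiniteMeasure (ENNReal.ofReal ε • Measure.dirac M) :=
    ⟨by rw [Measure.smul_apply, smul_eq_mul]; exact ENNReal.mul_lt_top ofReal_lt_top (measure_lt_top _ _)⟩
  infer_instance

lemma mymix_integral (ν₀ : Measure ℝ) [IsFiniteMeasure ν₀] {ε : ℝ} (M : ℝ)
    (h1 : 0 ≤ ε) (h2 : 2 * ε ≤ 1)
    {f : ℝ → ℝ} (hf : Continuous f) {C : ℝ} (hC : ∀ x, |f x| ≤ C) :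
    ∫ x, f x ∂(mymix ν₀ ε M) = (1 - 2*ε) * ∫ x, f x ∂ν₀ + ε * f (-M) + ε * f M := by
  have hi0 : Integrable f ν₀ := my_integrable_of_bdd hf hC ν₀
  have hia : Integrable f (ENNReal.ofReal (1-2*ε) • ν₀) := hi0.smul_measure ofReal_ne_top
  have hib : Integrable f (ENNReal.ofReal ε • Measure.dirac (-M)) :=
    (my_integrable_of_bdd hf hC _).smul_measure ofReal_ne_top
  have hic : Integrable f (ENNReal.ofReal ε • Measure.dirac M) :=
    (my_integrable_of_bdd hf hC _).smul_measure ofReal_ne_top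
  unfold mymix
  rw [integral_add_measure (hia.add_measure hib) hic, integral_add_measure hia hib,
    integral_smul_measure, integral_smul_measure, integral_smul_measure,
    integral_dirac' f _ hf.stronglyMeasurable, integral_dirac' f _ hf.stronglyMeasurable,
    ENNReal.toReal_ofReal (by linarith), ENNReal.toReal_ofReal h1]
  simp [smul_eq_mul]

lemma mymix_integrable_sq (ν₀ : Measure ℝ) [IsFiniteMeasure ν₀] (ε M : ℝ)
    (hi : Integrable (fun x : ℝ => x ^ 2) ν₀) :
    Integrable (fun x : ℝ => x ^ 2) (mymix ν₀ ε M) := by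
  unfold mymix
  have hd : ∀ a : ℝ, Integrable (fun x : ℝ => x ^ 2) (Measure.dirac a) := by
    intro a
    refine ⟨(by fun_prop : Measurable fun x : ℝ => x ^ 2).aestronglyMeasurable, ?_⟩
    show ∫⁻ x, ‖x ^ 2‖₊ ∂(Measure.dirac a) < ⊤
    rw [lintegral_dirac' a (by fun_prop)]
    exact ENNReal.coe_lt_top
  exact ((hi.smul_measure ofReal_ne_top).add_measure
    ((hd (-M)).smul_measure ofReal_ne_top)).add_measure ((hd M).smul_measure ofReal_ne_top)

lemma mymix_W2_le (ν₀ : Measure ℝ) [IsProbabilityMeasure ν₀]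
    (hi0 : Integrable (fun x : ℝ => x ^ 2) ν₀) {ε : ℝ} (M : ℝ)
    (h1 : 0 ≤ ε) (h2 : 2 * ε ≤ 1) :
    W2 (mymix ν₀ ε M) ν₀ ≤
      (ENNReal.ofReal (ε * (4 * M ^ 2 + 4 * ∫ x, x ^ 2 ∂ν₀))) ^ (1/2 : ℝ) := by
  set C₀ := ∫ x, x ^ 2 ∂ν₀ with hC₀def
  have hC₀ : 0 ≤ C₀ := integral_nonneg fun x => sq_nonneg x
  set Δ : ℝ → ℝ × ℝ := fun x => (x, x) with hΔ
  have hΔm : Measurable Δ := measurable_id.prodMk measurable_id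
  set π : Measure (ℝ × ℝ) :=
    ENNReal.ofReal (1 - 2 * ε) • (ν₀.map Δ)
      + ENNReal.ofReal ε • ((Measure.dirac (-M)).prod ν₀)
      + ENNReal.ofReal ε • ((Measure.dirac M).prod ν₀) with hπ
  have hfst : π.map Prod.fst = mymix ν₀ ε M := by
    rw [hπ, Measure.map_add _ _ measurable_fst, Measure.map_add _ _ measurable_fst,
      Measure.map_smul, Measure.map_smul, Measure.map_smul,
      Measure.map_map measurable_fst hΔm]
    have h₁ : (Prod.fst ∘ Δ) = id := rfl
    rw [h₁, Measure.map_id, Measure.map_fst_prod, Measure.map_fst_prod]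
    simp [mymix]
  have hsnd : π.map Prod.snd = ν₀ := by
    rw [hπ, Measure.map_add _ _ measurable_snd, Measure.map_add _ _ measurable_snd,
      Measure.map_smul, Measure.map_smul, Measure.map_smul,
      Measure.map_map measurable_snd hΔm]
    have h₁ : (Prod.snd ∘ Δ) = id := rfl
    rw [h₁, Measure.map_id, Measure.map_snd_prod, Measure.map_snd_prod]
    simp only [measure_univ, one_smul]
    rw [← add_smul, ← add_smul, ← ENNReal.ofReal_add (by linarith) h1,
      ← ENNReal.ofReal_add (by linarith) h1,
      show 1 - 2 * ε + ε + ε = 1 by ring, ENNReal.ofReal_one, one_smul]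
  have hFmeas : Measurable (fun q : ℝ × ℝ => ENNReal.ofReal ((q.1 - q.2) ^ 2)) := by
    fun_prop
  have hFeq : (fun q : ℝ × ℝ => ENNReal.ofReal (|q.1 - q.2| ^ (2:ℝ)))
      = fun q : ℝ × ℝ => ENNReal.ofReal ((q.1 - q.2) ^ 2) := by
    funext q
    rw [show ((2:ℝ)) = ((2:ℕ):ℝ) by norm_num, Real.rpow_natCast, sq_abs]
  have hprod : ∀ a : ℝ, ∫⁻ q, ENNReal.ofReal ((q.1 - q.2) ^ 2) ∂((Measure.dirac a).prod ν₀)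
      = ∫⁻ y, ENNReal.ofReal ((a - y) ^ 2) ∂ν₀ := by
    intro a
    rw [lintegral_prod _ hFmeas.aemeasurable,
      lintegral_dirac' a (hFmeas.lintegral_prod_right')]
  have hbound : ∀ a : ℝ, ∫⁻ y, ENNReal.ofReal ((a - y) ^ 2) ∂ν₀
      ≤ ENNReal.ofReal (2 * a ^ 2 + 2 * C₀) := by
    intro a
    have hint : Integrable (fun y : ℝ => 2 * a ^ 2 + 2 * y ^ 2) ν₀ :=
      (integrable_const _).add (hi0.const_mul 2)
    calc ∫⁻ y, ENNReal.ofReal ((a - y) ^ 2) ∂ν₀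
        ≤ ∫⁻ y, ENNReal.ofReal (2 * a ^ 2 + 2 * y ^ 2) ∂ν₀ :=
          lintegral_mono fun y => ENNReal.ofReal_le_ofReal (by nlinarith [sq_nonneg (a + y)])
      _ = ENNReal.ofReal (∫ y, (2 * a ^ 2 + 2 * y ^ 2) ∂ν₀) :=
          (ofReal_integral_eq_lintegral_ofReal hint
            (Eventually.of_forall fun y => by positivity)).symm
      _ = ENNReal.ofReal (2 * a ^ 2 + 2 * C₀) := by
          rw [integral_add (integrable_const _) (hi0.const_mul 2), integral_const,
            integral_const_mul, probReal_univ]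
          simp [hC₀def]
  have hcost : ∫⁻ q, ENNReal.ofReal ((q.1 - q.2) ^ 2) ∂π
      ≤ ENNReal.ofReal (ε * (4 * M ^ 2 + 4 * C₀)) := by
    rw [hπ, lintegral_add_measure, lintegral_add_measure, lintegral_smul_measure,
      lintegral_smul_measure, lintegral_smul_measure,
      lintegral_map hFmeas hΔm]
    have hzero : ∫⁻ x, ENNReal.ofReal (((Δ x).1 - (Δ x).2) ^ 2) ∂ν₀ = 0 := by
      simp [hΔ]
    rw [hzero, smul_zero, zero_add, hprod, hprod, smul_eq_mul, smul_eq_mul]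
    calc ENNReal.ofReal ε * ∫⁻ y, ENNReal.ofReal ((-M - y) ^ 2) ∂ν₀
          + ENNReal.ofReal ε * ∫⁻ y, ENNReal.ofReal ((M - y) ^ 2) ∂ν₀
        ≤ ENNReal.ofReal ε * ENNReal.ofReal (2 * M ^ 2 + 2 * C₀)
          + ENNReal.ofReal ε * ENNReal.ofReal (2 * M ^ 2 + 2 * C₀) := by
          gcongr
          · have := hbound (-M); simpa [neg_sq] using this
          · exact hbound M
      _ = ENNReal.ofReal (ε * (4 * M ^ 2 + 4 * C₀)) := by
          rw [← ENNReal.ofReal_mul h1, ← ENNReal.ofReal_add (by positivity) (by positivity)]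
          ring_nf
  have hle : W2 (mymix ν₀ ε M) ν₀
      ≤ (∫⁻ q, ENNReal.ofReal (|q.1 - q.2| ^ (2:ℝ)) ∂π) ^ (1 / (2:ℝ)) := by
    unfold W2 Wp
    refine le_trans (iInf_le _ π) (le_trans (iInf_le _ hfst) (iInf_le _ hsnd))
  refine hle.trans ?_
  rw [hFeq]
  exact ENNReal.rpow_le_rpow hcost (by norm_num)

set_option maxHeartbeats 1000000 in
/-- The key construction: an order-unrelated measure in any Wasserstein ball. -/
lemma key_lemma (μ : Measure ℝ) (hμ : μ ∈ P2) (ν₀ : Measure ℝ) (hν₀ : ν₀ ∈ P2)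
    (δ : ℝ≥0∞) (hδ : 0 < δ) :
    ∃ ν ∈ P2, W2 ν ν₀ < δ ∧ ¬ StOrder μ ν ∧ ¬ StOrder ν μ := by
  obtain ⟨hμp, hμi⟩ := hμ
  obtain ⟨hν₀p, hν₀i⟩ := hν₀
  set C₀ := ∫ x, x ^ 2 ∂ν₀ with hC₀def
  have hC₀ : 0 ≤ C₀ := integral_nonneg fun x => sq_nonneg x
  have h1C : (0:ℝ) < 1 + C₀ := by linarith
  -- target real quantity
  set d : ℝ≥0∞ := min δ 1 with hd
  have hd0 : d ≠ 0 := (lt_min hδ zero_lt_one).ne'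
  have hdt : d ≠ ⊤ := ((min_le_right δ 1).trans_lt ENNReal.one_lt_top).ne
  have hdr : 0 < d.toReal := ENNReal.toReal_pos hd0 hdt
  set T : ℝ := d.toReal ^ 2 with hT
  have hT0 : 0 < T := by positivity
  set η : ℝ := min (T / (33 * (1 + C₀))) (1/16) with hη
  have hη0 : 0 < η := lt_min (div_pos hT0 (by positivity)) (by norm_num)
  have hη16 : η ≤ 1/16 := min_le_right _ _
  have hη33 : η * (33 * (1 + C₀)) ≤ T := by
    calc η * (33 * (1 + C₀)) ≤ (T / (33 * (1 + C₀))) * (33 * (1 + C₀)) := by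
          gcongr; exact min_le_left _ _
      _ = T := div_mul_cancel₀ _ (by positivity)
  -- choose the threshold
  obtain ⟨N₁, hN₁⟩ := (eventually_atTop).mp ((tail_tendsto μ hμi).eventually_lt_const hη0)
  obtain ⟨K, hK⟩ := exists_nat_gt (1/η)
  set n : ℕ := N₁ + K + 3 with hn
  set a : ℝ := (n : ℝ) with ha
  have ha3 : (3:ℝ) ≤ a := by
    rw [ha]; exact_mod_cast Nat.le_add_left 3 (N₁ + K)
  have ha0 : (0:ℝ) < a := by linarith
  set M : ℝ := a + 1 with hM
  have hM0 : (0:ℝ) < M := by linarith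
  set g : ℝ := ∫ x, ({y : ℝ | a ≤ |y|}).indicator (fun y => y ^ 2) x ∂μ with hg
  have hg0 : 0 ≤ g :=
    integral_nonneg fun x => Set.indicator_nonneg (fun y _ => sq_nonneg y) x
  have hgη : g < η := hN₁ n (by omega)
  have hMη : 1 / M < η := by
    have hKn : (K:ℝ) ≤ a := by rw [ha]; exact_mod_cast Nat.le_add_right K 3 |>.trans (by omega)
    have h1 : 1 / η < M := by linarith
    rw [div_lt_iff₀ hM0]
    have := (div_lt_iff₀ hη0).mp h1
    linarith
  set ε : ℝ := (g + 1/M) / a ^ 2 with hε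
  have hεpos : 0 < ε := div_pos (by positivity) (by positivity)
  have hgM : g + 1/M < 2 * η := by linarith
  have hε2 : 2 * ε ≤ 1 := by
    rw [hε, show 2 * ((g + 1/M) / a ^ 2) = (2 * (g + 1/M)) / a ^ 2 by ring,
      div_le_one (by positivity)]
    nlinarith
  -- tail estimate
  set tail : ℝ := (μ {y : ℝ | a ≤ |y|}).toReal with htaildef
  have htail : tail < ε := by
    rw [hε, lt_div_iff₀ (by positivity)]
    have := cheb μ hμi ha0
    have h1M : 0 < 1/M := by positivity
    rw [htaildef]
    linarith [this]
  clear_value tail ε g M a n η T d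
  -- cost estimate
  have hcost : ε * (4 * M ^ 2 + 4 * C₀) < T := by
    have key1 : 4 * M ^ 2 + 4 * C₀ ≤ 16 * (1 + C₀) * a ^ 2 := by
      rw [hM]
      have h3a : 3 * a ≤ a ^ 2 := by nlinarith [mul_nonneg (sub_nonneg.mpr ha3) ha0.le]
      have h9 : (9:ℝ) ≤ a ^ 2 := by nlinarith
      have hCa : 9 * C₀ ≤ C₀ * a ^ 2 := by nlinarith [mul_le_mul_of_nonneg_left h9 hC₀]
      nlinarith [h3a, h9, hCa]
    have step : ε * (4 * M ^ 2 + 4 * C₀) ≤ (g + 1/M) * (16 * (1 + C₀)) := by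
      rw [hε, div_mul_eq_mul_div, div_le_iff₀ (by positivity)]
      have hgM0 : 0 ≤ g + 1/M := by positivity
      calc (g + 1/M) * (4 * M ^ 2 + 4 * C₀) ≤ (g + 1/M) * (16 * (1 + C₀) * a ^ 2) := by
            exact mul_le_mul_of_nonneg_left key1 hgM0
        _ = (g + 1/M) * (16 * (1 + C₀)) * a ^ 2 := by ring
    refine step.trans_lt ?_
    have e1 := mul_lt_mul_of_pos_right hgη h1C
    have e2 := mul_lt_mul_of_pos_right hMη h1C
    linarith only [e1, e2, hη33, hT0]
  -- the measure
  haveI := hν₀p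
  haveI := hμp
  haveI hνp : IsProbabilityMeasure (mymix ν₀ ε M) := mymix_prob ν₀ M hεpos.le hε2
  refine ⟨mymix ν₀ ε M, ⟨hνp, mymix_integrable_sq ν₀ ε M hν₀i⟩, ?_, ?_, ?_⟩
  · -- Wasserstein estimate
    refine lt_of_le_of_lt (mymix_W2_le ν₀ hν₀i M hεpos.le hε2) ?_
    have h2 : ENNReal.ofReal T = d ^ (2:ℕ) := by
      rw [hT, ENNReal.ofReal_pow ENNReal.toReal_nonneg, ENNReal.ofReal_toReal hdt]
    have h1 : ENNReal.ofReal (ε * (4 * M ^ 2 + 4 * C₀)) < d ^ (2:ℕ) := by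
      rw [← h2]
      exact (ENNReal.ofReal_lt_ofReal_iff hT0).mpr hcost
    calc (ENNReal.ofReal (ε * (4 * M ^ 2 + 4 * C₀))) ^ (1/2 : ℝ)
        < (d ^ (2:ℕ)) ^ (1/2 : ℝ) := ENNReal.rpow_lt_rpow h1 (by norm_num)
      _ = d := by
          rw [← ENNReal.rpow_natCast d 2, ← ENNReal.rpow_mul]
          norm_num
      _ ≤ δ := by rw [hd]; exact min_le_left _ _
  · -- ¬ StOrder μ ν  via  mycut (-M)
    intro hst
    have hW := hst (mycut (-M)) (mycut_mono _) ⟨1, mycut_abs_le _⟩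
    have hI : ∫ x, mycut (-M) x ∂(mymix ν₀ ε M)
        = (1 - 2*ε) * ∫ x, mycut (-M) x ∂ν₀ + ε * mycut (-M) (-M) + ε * mycut (-M) M :=
      mymix_integral ν₀ M hεpos.le hε2 (mycut_cont _) (mycut_abs_le _)
    rw [mycut_eq_zero le_rfl, mycut_eq_one (by linarith)] at hI
    have hJ1 : ∫ x, mycut (-M) x ∂ν₀ ≤ 1 := by
      calc ∫ x, mycut (-M) x ∂ν₀ ≤ ∫ _x, (1:ℝ) ∂ν₀ :=
            integral_mono (my_integrable_of_bdd (mycut_cont _) (mycut_abs_le _) ν₀)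
              (integrable_const 1) (mycut_le_one _)
        _ = 1 := by simp
    have hν_le : ∫ x, mycut (-M) x ∂(mymix ν₀ ε M) ≤ 1 - ε := by
      rw [hI]; nlinarith
    -- lower bound for ∫ mycut (-M) dμ
    have hind : ∫ x, (Set.Ici (-M + 1)).indicator (fun _ => (1:ℝ)) x ∂μ
        ≤ ∫ x, mycut (-M) x ∂μ :=
      integral_mono ((integrable_const 1).indicator measurableSet_Ici)
        (my_integrable_of_bdd (mycut_cont _) (mycut_abs_le _) μ)
        (indicator_le_mycut (-M))
    rw [integral_indicator_const (1:ℝ) measurableSet_Ici, smul_eq_mul, mul_one, measureReal_def] at hind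
    have hsplit : (μ (Set.Iio (-M + 1))).toReal + (μ (Set.Ici (-M + 1))).toReal = 1 := by
      rw [← ENNReal.toReal_add (measure_ne_top _ _) (measure_ne_top _ _),
        ← measure_union (Set.Iio_disjoint_Ici le_rfl) measurableSet_Ici,
        Set.Iio_union_Ici, measure_univ, ENNReal.toReal_one]
    have hsub : Set.Iio (-M + 1) ⊆ {y : ℝ | a ≤ |y|} := by
      intro x hx
      have hx' : x < -a := by simp only [Set.mem_Iio] at hx; linarith
      have : a ≤ -x := by linarith
      exact this.trans (neg_le_abs x)
    have hmono : (μ (Set.Iio (-M + 1))).toReal ≤ tail := by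
      rw [htaildef]
      exact ENNReal.toReal_mono (measure_ne_top _ _) (measure_mono hsub)
    have hμ_ge : 1 - ε < ∫ x, mycut (-M) x ∂μ := by
      have : 1 - tail ≤ (μ (Set.Ici (-M + 1))).toReal := by linarith
      linarith
    linarith
  · -- ¬ StOrder ν μ  via  mycut a
    intro hst
    have hW := hst (mycut a) (mycut_mono _) ⟨1, mycut_abs_le _⟩
    have hI : ∫ x, mycut a x ∂(mymix ν₀ ε M)
        = (1 - 2*ε) * ∫ x, mycut a x ∂ν₀ + ε * mycut a (-M) + ε * mycut a M :=
      mymix_integral ν₀ M hεpos.le hε2 (mycut_cont _) (mycut_abs_le _)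
    rw [mycut_eq_zero (by linarith), mycut_eq_one (by linarith)] at hI
    have hJ0 : 0 ≤ ∫ x, mycut a x ∂ν₀ := integral_nonneg (mycut_nonneg a)
    have hν_ge : ε ≤ ∫ x, mycut a x ∂(mymix ν₀ ε M) := by
      rw [hI]; nlinarith
    -- upper bound for ∫ mycut a dμ
    have hind : ∫ x, mycut a x ∂μ
        ≤ ∫ x, (Set.Ioi a).indicator (fun _ => (1:ℝ)) x ∂μ :=
      integral_mono (my_integrable_of_bdd (mycut_cont _) (mycut_abs_le _) μ)
        ((integrable_const 1).indicator measurableSet_Ioi)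
        (mycut_le_indicator a)
    rw [integral_indicator_const (1:ℝ) measurableSet_Ioi, smul_eq_mul, mul_one, measureReal_def] at hind
    have hsub : Set.Ioi a ⊆ {y : ℝ | a ≤ |y|} := by
      intro x hx
      have hx' : a < x := hx
      exact (le_of_lt hx').trans (le_abs_self x)
    have hmono : (μ (Set.Ioi a)).toReal ≤ tail := by
      rw [htaildef]
      exact ENNReal.toReal_mono (measure_ne_top _ _) (measure_mono hsub)
    linarith

/-- For any `μ ∈ 𝒫₂(ℝ)` and any nonempty open set in the 2-Wasserstein
topology (equivalently, any 𝒲₂-ball `B(ν₀,δ)`), there is a `ν` in it that is order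
unrelated to `μ`. In particular, every order interval in `𝒫₂(ℝ)` has empty interior. -/
theorem no_strong_order (μ : Measure ℝ) (hμ : μ ∈ P2)
    (ν₀ : Measure ℝ) (hν₀ : ν₀ ∈ P2) (δ : ℝ≥0∞) (hδ : 0 < δ) :
    (∃ ν ∈ P2, W2 ν ν₀ < δ ∧ ¬ StOrder μ ν ∧ ¬ StOrder ν μ) ∧
    (∀ a b : Measure ℝ, a ∈ P2 → b ∈ P2 → StOrder a b →
      ∃ ν ∈ P2, W2 ν ν₀ < δ ∧ ¬ (StOrder a ν ∧ StOrder ν b)) := by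
  refine ⟨key_lemma μ hμ ν₀ hν₀ δ hδ, ?_⟩
  intro a b ha hb _hab
  obtain ⟨ν, hν, hWν, hna, _⟩ := key_lemma a ha ν₀ hν₀ δ hδ
  exact ⟨ν, hν, hWν, fun h => hna h.1⟩
end
end

section
/- Let f : ℝ → ℝ be continuous with zero-crossing number Z(f) = 1, of polynomial growth, and suppose f ≤ 0 on (−∞, x₀], f ≥ 0 on [x₀, ∞) with f(x₋) < 0 < f(x₊) for some x₋ < x₀ < x₊. Let V' : ℝ → ℝ be continuous and such that all integrals below converge, θ > 0, and σ : ℝ → ℝ satisfy 0 < σ̲² ≤ σ² ≤ σ̄². Then the function F(m) = ∫_ℝ f(x) exp{ −2 ∫₀^x (V'(y) + θy − θm)/σ²(y) dy } dx has exactly one zero. Key step: letting Σ(x) = ∫_{x₀}^x σ(y)^{-2} dy, the derivative F̃'(m) of the shifted function F̃(m) = ∫ f(x) exp{−2∫_{x₀}^x (V'(y)+θy−θm)/σ²(y) dy} dx equals ∫ 2θ Σ(x) f(x) exp{...} dx and is bounded below by a positive constant uniformly in m, since Σ·f ≥ 0 everywhere and Σ·f > 0 near x₊ (for m ≥ 0)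 and near x₋ (for m < 0). -/
open MeasureTheory Filter Set ENNReal

noncomputable section

set_option maxHeartbeats 4000000 in
/-- If `f` is continuous, of polynomial growth, with zero-crossing number 1
(nonpositive left of `x₀`, nonnegative right of `x₀`, strictly negative at some `x₋ < x₀`
and strictly positive at some `x₊ > x₀`), `V'` is continuous with the relevant integrals
convergent, `θ > 0` and `σ` is non-degenerate and bounded, then
`F(m) = ∫ f(x) exp{−2∫₀ˣ (V'(y)+θy−θm)/σ²(y) dy} dx` has exactly one zero. -/
theorem self_consistency_unique_zero (f V' σ : ℝ → ℝ) (θ : ℝ) (hθ : 0 < θ)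
    (hf : Continuous f) (hV : Continuous V') (hσm : Measurable σ)
    (σlo σhi : ℝ) (hlo : 0 < σlo)
    (hσ : ∀ x, σlo ^ 2 ≤ (σ x) ^ 2 ∧ (σ x) ^ 2 ≤ σhi ^ 2)
    (x₀ xm xp : ℝ) (hxm : xm < x₀) (hxp : x₀ < xp)
    (hneg : ∀ x, x ≤ x₀ → f x ≤ 0) (hposs : ∀ x, x₀ ≤ x → 0 ≤ f x)
    (hfm : f xm < 0) (hfp : 0 < f xp)
    (hgrowth : ∃ L κ : ℝ, 0 ≤ L ∧ 1 ≤ κ ∧ ∀ x, |f x| ≤ L * (1 + |x| ^ κ))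
    (hint : ∀ m : ℝ, Integrable (fun x =>
      f x * Real.exp (-2 * ∫ y in (0:ℝ)..x, (V' y + θ * y - θ * m) / (σ y) ^ 2))
      (volume : Measure ℝ))
    (hint' : ∀ m : ℝ, Integrable (fun x =>
      (∫ y in x₀..x, 1 / (σ y) ^ 2) * f x *
        Real.exp (-2 * ∫ y in x₀..x, (V' y + θ * y - θ * m) / (σ y) ^ 2))
      (volume : Measure ℝ)) :
    ∃! m : ℝ,
      (∫ x, f x * Real.exp (-2 * ∫ y in (0:ℝ)..x, (V' y + θ * y - θ * m) / (σ y) ^ 2))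
        = 0 := by
  clear hint' hgrowth
  -- basic facts about σ
  have hσ2pos : ∀ y, (0:ℝ) < (σ y)^2 := fun y => lt_of_lt_of_le (pow_pos hlo 2) (hσ y).1
  have hσhi2 : (0:ℝ) < σhi^2 := lt_of_lt_of_le (pow_pos hlo 2) ((hσ 0).1.trans (hσ 0).2)
  set q : ℝ → ℝ := fun y => 1 / (σ y)^2 with hq_def
  set w : ℝ → ℝ := fun y => (V' y + θ * y) / (σ y)^2 with hw_def
  have hq_meas : Measurable q := measurable_const.div (hσm.pow_const 2)
  have hq_pos : ∀ y, 0 < q y := fun y => one_div_pos.2 (hσ2pos y)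
  have hfin : ∀ a b : ℝ, volume (Set.uIoc a b) ≠ ⊤ := fun a b => measure_Ioc_lt_top.ne
  have hq_le : ∀ y, q y ≤ 1/σlo^2 := fun y => by
    simp only [hq_def]
    exact one_div_le_one_div_of_le (pow_pos hlo 2) (hσ y).1
  have hq_ge : ∀ y, 1/σhi^2 ≤ q y := fun y => by
    simp only [hq_def]
    exact one_div_le_one_div_of_le (hσ2pos y) (hσ y).2
  have hiq : ∀ a b : ℝ, IntervalIntegrable q volume a b := by
    intro a b
    rw [intervalIntegrable_iff]
    refine Measure.integrableOn_of_bounded (M := 1/σlo^2) (hfin a b)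
      hq_meas.aestronglyMeasurable (ae_of_all _ fun y => ?_)
    rw [Real.norm_eq_abs, abs_of_pos (hq_pos y)]
    exact hq_le y
  have hiw : ∀ a b : ℝ, IntervalIntegrable w volume a b := by
    intro a b
    obtain ⟨C, hC⟩ := (isCompact_uIcc (a := a) (b := b)).exists_bound_of_continuousOn
      ((hV.add (continuous_const.mul continuous_id)).continuousOn)
    rw [intervalIntegrable_iff]
    refine Measure.integrableOn_of_bounded (M := |C| * (1/σlo^2)) (hfin a b)
      ((hV.add (continuous_const.mul continuous_id)).measurable.div
        (hσm.pow_const 2)).aestronglyMeasurable ?_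
    refine (ae_restrict_iff' measurableSet_uIoc).2 (ae_of_all _ fun y hy => ?_)
    have hy' : y ∈ Set.uIcc a b := Set.uIoc_subset_uIcc hy
    have h1 : |V' y + θ * y| ≤ |C| := le_trans (by simpa using hC y hy') (le_abs_self C)
    show |(V' y + θ * y) / σ y ^ 2| ≤ _
    rw [abs_div, abs_of_pos (hσ2pos y), mul_one_div]
    have h2 : (0:ℝ) < σlo ^ 2 := pow_pos hlo 2
    rw [div_le_div_iff₀ (hσ2pos y) h2]
    calc |V' y + θ * y| * σlo ^ 2 ≤ |C| * σ y ^ 2 :=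
          mul_le_mul h1 (hσ y).1 h2.le (abs_nonneg C)
      _ = |C| * σ y ^ 2 := rfl
  -- main objects
  set I : ℝ → ℝ := fun x => ∫ y in (0:ℝ)..x, w y with hI_def
  set T : ℝ → ℝ := fun x => ∫ y in x₀..x, q y with hT_def
  set s0 : ℝ := ∫ y in (0:ℝ)..x₀, q y with hs0_def
  set A : ℝ → ℝ := fun x => Real.exp (-2 * I x) with hA_def
  set g : ℝ → ℝ → ℝ := fun m x => f x * A x * Real.exp (2*θ*m*(T x)) with hg_def
  have hA_pos : ∀ x, 0 < A x := fun x => Real.exp_pos _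
  have key : ∀ m x, f x * Real.exp (-2 * ∫ y in (0:ℝ)..x, (V' y + θ*y - θ*m)/(σ y)^2)
      = Real.exp (2*θ*m*s0) * g m x := by
    intro m x
    have h1 : ∀ y : ℝ, (V' y + θ*y - θ*m)/(σ y)^2 = w y - (θ*m) * q y := by
      intro y
      simp only [hw_def, hq_def, mul_one_div]
      rw [← sub_div]
    have h2 : (∫ y in (0:ℝ)..x, (V' y + θ*y - θ*m)/(σ y)^2) = I x - θ*m*(s0 + T x) := by
      rw [show (fun y => (V' y + θ*y - θ*m)/(σ y)^2) = fun y => w y - (θ*m) * q y from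
        funext h1]
      rw [intervalIntegral.integral_sub (hiw 0 x) ((hiq 0 x).const_mul (θ*m)),
        intervalIntegral.integral_const_mul,
        ← intervalIntegral.integral_add_adjacent_intervals (hiq 0 x₀) (hiq x₀ x)]
    rw [h2]
    simp only [hg_def]
    rw [show -2*(I x - θ*m*(s0 + T x)) = (2*θ*m*s0) + (-2*I x + 2*θ*m*T x) by ring,
      Real.exp_add, Real.exp_add]
    simp only [hA_def]
    ring
  have hgi : ∀ m, Integrable (g m) := by
    intro m
    have h := (hint m).const_mul (Real.exp (-(2*θ*m*s0)))
    have he : (fun x => Real.exp (-(2*θ*m*s0)) *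
        (f x * Real.exp (-2 * ∫ y in (0:ℝ)..x, (V' y + θ*y - θ*m)/(σ y)^2))) = g m := by
      funext x
      rw [key m x, ← mul_assoc, ← Real.exp_add]
      simp
    rwa [he] at h
  have hT_cont : Continuous T := intervalIntegral.continuous_primitive hiq x₀
  have hI_cont : Continuous I := intervalIntegral.continuous_primitive hiw 0
  have hA_cont : Continuous A := Real.continuous_exp.comp (continuous_const.mul hI_cont)
  have hg_cont : ∀ m, Continuous (g m) := fun m =>
    (hf.mul hA_cont).mul (Real.continuous_exp.comp (continuous_const.mul hT_cont))
  -- T facts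
  have hT_mono : Monotone T := by
    intro x1 x2 h12
    have he : T x1 + ∫ y in x1..x2, q y = T x2 :=
      intervalIntegral.integral_add_adjacent_intervals (hiq x₀ x1) (hiq x1 x2)
    have hnn : 0 ≤ ∫ y in x1..x2, q y :=
      intervalIntegral.integral_nonneg h12 (fun u _ => (hq_pos u).le)
    linarith
  have hT_lb : ∀ x, x₀ ≤ x → (x - x₀) * (1/σhi^2) ≤ T x := by
    intro x hx
    have h1 : (∫ y in x₀..x, (1/σhi^2 : ℝ)) ≤ T x :=
      intervalIntegral.integral_mono_on hx intervalIntegrable_const (hiq x₀ x)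
        (fun y _ => hq_ge y)
    rwa [intervalIntegral.integral_const, smul_eq_mul] at h1
  have hT_ub : ∀ x, x ≤ x₀ → T x ≤ (x - x₀) * (1/σhi^2) := by
    intro x hx
    have h1 : (∫ y in x..x₀, (1/σhi^2 : ℝ)) ≤ ∫ y in x..x₀, q y :=
      intervalIntegral.integral_mono_on hx intervalIntegrable_const (hiq x x₀)
        (fun y _ => hq_ge y)
    rw [intervalIntegral.integral_const, smul_eq_mul] at h1
    have h2 : T x = - ∫ y in x..x₀, q y := by
      simp only [hT_def]
      rw [intervalIntegral.integral_symm]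
    rw [h2]; nlinarith
  have hT_nonneg : ∀ x, x₀ ≤ x → 0 ≤ T x := fun x hx =>
    le_trans (mul_nonneg (sub_nonneg.2 hx) (one_div_pos.2 hσhi2).le) (hT_lb x hx)
  have hT_nonpos : ∀ x, x ≤ x₀ → T x ≤ 0 := fun x hx =>
    le_trans (hT_ub x hx) (by nlinarith [one_div_pos.2 hσhi2])
  -- monotone difference
  have hmono_diff : ∀ m1 m2 : ℝ, m1 ≤ m2 → ∀ x, 0 ≤ g m2 x - g m1 x := by
    intro m1 m2 h12 x
    simp only [hg_def]
    have hA := hA_pos x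
    rcases le_total x x₀ with hx | hx
    · have hT := hT_nonpos x hx
      have hprod : 0 ≤ θ * (m2 - m1) * (-T x) :=
        mul_nonneg (mul_nonneg hθ.le (sub_nonneg.2 h12)) (neg_nonneg.2 hT)
      have he : Real.exp (2*θ*m2*T x) ≤ Real.exp (2*θ*m1*T x) := by
        apply Real.exp_le_exp.2; nlinarith [hprod]
      have hfa : f x * A x ≤ 0 := mul_nonpos_of_nonpos_of_nonneg (hneg x hx) (hA_pos x).le
      have h3 : 0 ≤ (-(f x * A x)) * (Real.exp (2*θ*m1*T x) - Real.exp (2*θ*m2*T x)) :=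
        mul_nonneg (neg_nonneg.2 hfa) (sub_nonneg.2 he)
      nlinarith [h3]
    · have hT := hT_nonneg x hx
      have hprod : 0 ≤ θ * (m2 - m1) * T x :=
        mul_nonneg (mul_nonneg hθ.le (sub_nonneg.2 h12)) hT
      have he : Real.exp (2*θ*m1*T x) ≤ Real.exp (2*θ*m2*T x) := by
        apply Real.exp_le_exp.2; nlinarith [hprod]
      have hfa : 0 ≤ f x * A x := mul_nonneg (hposs x hx) (hA_pos x).le
      have h3 : 0 ≤ (f x * A x) * (Real.exp (2*θ*m2*T x) - Real.exp (2*θ*m1*T x)) :=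
        mul_nonneg hfa (sub_nonneg.2 he)
      nlinarith [h3]
  set G : ℝ → ℝ := fun m => ∫ x, g m x with hG_def
  have hG_mono : StrictMono G := by
    intro m1 m2 h12
    have hsub : G m2 - G m1 = ∫ x, (g m2 x - g m1 x) :=
      (integral_sub (hgi m2) (hgi m1)).symm
    have hd_cont : Continuous (fun x => g m2 x - g m1 x) := (hg_cont m2).sub (hg_cont m1)
    have hpos : 0 < ∫ x, (g m2 x - g m1 x) := by
      rw [integral_pos_iff_support_of_nonneg (fun x => hmono_diff m1 m2 h12.le x)
        ((hgi m2).sub (hgi m1))]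
      have hopen : IsOpen (Function.support fun x => g m2 x - g m1 x) := by
        have : (Function.support fun x => g m2 x - g m1 x) =
            (fun x => g m2 x - g m1 x) ⁻¹' ({0}ᶜ) := rfl
        rw [this]
        exact (isClosed_singleton.preimage hd_cont).isOpen_compl
      refine hopen.measure_pos volume ⟨xp, ?_⟩
      have hTxp : 0 < T xp := lt_of_lt_of_le
        (mul_pos (sub_pos.2 hxp) (one_div_pos.2 hσhi2)) (hT_lb xp hxp.le)
      have hprod : 0 < θ * (m2 - m1) * T xp :=
        mul_pos (mul_pos hθ (sub_pos.2 h12)) hTxp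
      have he : Real.exp (2*θ*m1*T xp) < Real.exp (2*θ*m2*T xp) := by
        apply Real.exp_lt_exp.2; nlinarith [hprod]
      have h3 : 0 < (f xp * A xp) * (Real.exp (2*θ*m2*T xp) - Real.exp (2*θ*m1*T xp)) :=
        mul_pos (mul_pos hfp (hA_pos xp)) (sub_pos.2 he)
      have : 0 < g m2 xp - g m1 xp := by
        simp only [hg_def]
        nlinarith [h3]
      exact ne_of_gt this
    linarith
  have hG_cont : Continuous G := by
    rw [continuous_iff_continuousAt]
    intro m₀
    simp only [hG_def]
    refine continuousAt_of_dominated (bound := fun x => |g (m₀+1) x| + |g (m₀-1) x|)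
      (Eventually.of_forall (fun m => (hg_cont m).aestronglyMeasurable)) ?_
      (((hgi (m₀+1)).abs).add ((hgi (m₀-1)).abs)) ?_
    · filter_upwards [Metric.ball_mem_nhds m₀ one_pos] with m hm
      refine ae_of_all _ fun x => ?_
      rw [Metric.mem_ball, Real.dist_eq, abs_lt] at hm
      have hnorm : ∀ m' : ℝ, ‖g m' x‖ = |f x * A x| * Real.exp (2*θ*m'*T x) := by
        intro m'
        simp only [hg_def, Real.norm_eq_abs, abs_mul, abs_of_pos (Real.exp_pos _)]
      rw [hnorm]
      rcases le_total 0 (T x) with hT | hT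
      · have he : Real.exp (2*θ*m*T x) ≤ Real.exp (2*θ*(m₀+1)*T x) := by
          apply Real.exp_le_exp.2
          nlinarith [mul_nonneg (mul_nonneg hθ.le (by linarith : (0:ℝ) ≤ m₀ + 1 - m)) hT]
        have : |f x * A x| * Real.exp (2*θ*m*T x) ≤ |g (m₀+1) x| := by
          rw [← Real.norm_eq_abs (g (m₀+1) x), hnorm (m₀+1)]
          exact mul_le_mul_of_nonneg_left he (abs_nonneg _)
        exact le_trans this (le_add_of_nonneg_right (abs_nonneg _))
      · have he : Real.exp (2*θ*m*T x) ≤ Real.exp (2*θ*(m₀-1)*T x) := by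
          apply Real.exp_le_exp.2
          nlinarith [mul_nonneg (mul_nonneg hθ.le (by linarith : (0:ℝ) ≤ m - (m₀-1))) (neg_nonneg.2 hT)]
        have : |f x * A x| * Real.exp (2*θ*m*T x) ≤ |g (m₀-1) x| := by
          rw [← Real.norm_eq_abs (g (m₀-1) x), hnorm (m₀-1)]
          exact mul_le_mul_of_nonneg_left he (abs_nonneg _)
        exact le_trans this (le_add_of_nonneg_left (abs_nonneg _))
    · refine ae_of_all _ fun x => ?_
      have : Continuous (fun m => g m x) := by
        simp only [hg_def]
        exact continuous_const.mul (Real.continuous_exp.comp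
          ((continuous_const.mul continuous_id).mul continuous_const))
      exact this.continuousAt
  -- bounds on half-line integrals
  set C : ℝ := ∫ x, |g 0 x| with hC_def
  have hC0 : (0:ℝ) ≤ C := integral_nonneg (fun x => abs_nonneg _)
  have hsplit : ∀ m, G m = (∫ x in Iic x₀, g m x) + ∫ x in Ioi x₀, g m x := by
    intro m
    simp only [hG_def]
    rw [← Set.compl_Iic]
    exact (integral_add_compl measurableSet_Iic (hgi m)).symm
  have hIic_lb : ∀ m, 0 ≤ m → -C ≤ ∫ x in Iic x₀, g m x := by
    intro m hm
    have hpt : ∀ x ∈ Iic x₀, g 0 x ≤ g m x := by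
      intro x hx
      simp only [hg_def, mul_zero, zero_mul, Real.exp_zero, mul_one]
      have hT := hT_nonpos x hx
      have he : Real.exp (2*θ*m*T x) ≤ 1 := Real.exp_le_one_iff.2
        (by nlinarith [mul_nonneg (mul_nonneg hθ.le hm) (neg_nonneg.2 hT)])
      have hfa : f x * A x ≤ 0 := mul_nonpos_of_nonpos_of_nonneg (hneg x hx) (hA_pos x).le
      nlinarith [mul_nonneg (neg_nonneg.2 hfa) (sub_nonneg.2 he)]
    have h1 : ∫ x in Iic x₀, g 0 x ≤ ∫ x in Iic x₀, g m x :=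
      setIntegral_mono_on ((hgi 0).integrableOn) ((hgi m).integrableOn)
        measurableSet_Iic hpt
    have ha : ∫ x in Iic x₀, -|g 0 x| ≤ ∫ x in Iic x₀, g 0 x :=
      setIntegral_mono_on ((hgi 0).abs.neg.integrableOn) ((hgi 0).integrableOn)
        measurableSet_Iic (fun x _ => neg_abs_le _)
    have hb : ∫ x in Iic x₀, |g 0 x| ≤ C :=
      setIntegral_le_integral (hgi 0).abs (ae_of_all _ fun x => abs_nonneg _)
    rw [integral_neg] at ha
    linarith
  have hIoi_ub : ∀ m, m ≤ 0 → (∫ x in Ioi x₀, g m x) ≤ C := by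
    intro m hm
    have hpt : ∀ x ∈ Ioi x₀, g m x ≤ g 0 x := by
      intro x hx
      have hx' : x₀ ≤ x := le_of_lt hx
      simp only [hg_def, mul_zero, zero_mul, Real.exp_zero, mul_one]
      have hT := hT_nonneg x hx'
      have he : Real.exp (2*θ*m*T x) ≤ 1 := Real.exp_le_one_iff.2
        (by nlinarith [mul_nonneg (mul_nonneg hθ.le (neg_nonneg.2 hm)) hT])
      have hfa : 0 ≤ f x * A x := mul_nonneg (hposs x hx') (hA_pos x).le
      nlinarith [mul_nonneg hfa (sub_nonneg.2 he)]
    have h1 : ∫ x in Ioi x₀, g m x ≤ ∫ x in Ioi x₀, g 0 x :=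
      setIntegral_mono_on ((hgi m).integrableOn) ((hgi 0).integrableOn)
        measurableSet_Ioi hpt
    have ha : ∫ x in Ioi x₀, g 0 x ≤ ∫ x in Ioi x₀, |g 0 x| :=
      setIntegral_mono_on ((hgi 0).integrableOn) ((hgi 0).abs.integrableOn)
        measurableSet_Ioi (fun x _ => le_abs_self _)
    have hb : ∫ x in Ioi x₀, |g 0 x| ≤ C :=
      setIntegral_le_integral (hgi 0).abs (ae_of_all _ fun x => abs_nonneg _)
    linarith
  -- positive bump interval right of x₀
  have hUopen : IsOpen {x : ℝ | x₀ < x ∧ 0 < f x} := by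
    have : {x : ℝ | x₀ < x ∧ 0 < f x} = (Set.Ioi x₀) ∩ f ⁻¹' (Set.Ioi 0) := rfl
    rw [this]
    exact isOpen_Ioi.inter (isOpen_Ioi.preimage hf)
  obtain ⟨ε, hε, hball⟩ := Metric.isOpen_iff.1 hUopen xp ⟨hxp, hfp⟩
  set a : ℝ := xp - ε/2 with ha_def
  set b : ℝ := xp + ε/2 with hb_def
  have hab : a < b := by simp only [ha_def, hb_def]; linarith
  have hsub : Icc a b ⊆ {x : ℝ | x₀ < x ∧ 0 < f x} := by
    intro x hx
    apply hball
    rw [Metric.mem_ball, Real.dist_eq, abs_lt]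
    obtain ⟨h1, h2⟩ := hx
    constructor
    · simp only [ha_def] at h1; linarith
    · simp only [hb_def] at h2; linarith
  have ha0 : x₀ < a := (hsub ⟨le_rfl, hab.le⟩).1
  obtain ⟨z, hzmem, hzmin⟩ := isCompact_Icc.exists_isMinOn (Set.nonempty_Icc.2 hab.le)
    ((hf.mul hA_cont).continuousOn)
  set c : ℝ := f z * A z with hc_def
  have hc : 0 < c := mul_pos (hsub hzmem).2 (hA_pos z)
  have hτ : 0 < T a := lt_of_lt_of_le
    (mul_pos (sub_pos.2 ha0) (one_div_pos.2 hσhi2)) (hT_lb a ha0.le)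
  have hIcc_lb : ∀ m, 0 ≤ m →
      (c * Real.exp (2*θ*m*T a)) * (b - a) ≤ ∫ x in Icc a b, g m x := by
    intro m hm
    have hpt : ∀ x ∈ Icc a b, c * Real.exp (2*θ*m*T a) ≤ g m x := by
      intro x hx
      have hTa : T a ≤ T x := hT_mono hx.1
      have he : Real.exp (2*θ*m*T a) ≤ Real.exp (2*θ*m*T x) := Real.exp_le_exp.2
        (by nlinarith [mul_nonneg (mul_nonneg hθ.le hm) (sub_nonneg.2 hTa)])
      have hfa : c ≤ f x * A x := isMinOn_iff.1 hzmin x hx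
      simp only [hg_def]
      calc c * Real.exp (2*θ*m*T a) ≤ c * Real.exp (2*θ*m*T x) :=
            mul_le_mul_of_nonneg_left he hc.le
        _ ≤ f x * A x * Real.exp (2*θ*m*T x) :=
            mul_le_mul_of_nonneg_right hfa (Real.exp_pos _).le
    have h := setIntegral_ge_of_const_le (μ := volume) measurableSet_Icc
      (by rw [Real.volume_Icc]; exact ofReal_ne_top) hpt ((hgi m).integrableOn)
    rw [measureReal_def, Real.volume_Icc, ENNReal.toReal_ofReal (by linarith), smul_eq_mul] at h
    linarith
  have hIoi_lb : ∀ m, (∫ x in Icc a b, g m x) ≤ ∫ x in Ioi x₀, g m x := by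
    intro m
    refine setIntegral_mono_set ((hgi m).integrableOn) ?_
      (HasSubset.Subset.eventuallyLE (fun x hx => lt_of_lt_of_le ha0 hx.1))
    refine (ae_restrict_iff' measurableSet_Ioi).2 (ae_of_all _ fun x hx => ?_)
    simp only [hg_def]
    exact mul_nonneg (mul_nonneg (hposs x (le_of_lt hx)) (hA_pos x).le) (Real.exp_pos _).le
  have hGpos : ∃ m, 0 < G m := by
    set R : ℝ := (C + 1)/(c * (b - a)) with hR_def
    have hcb : 0 < c * (b - a) := mul_pos hc (by linarith)
    have hRpos : 0 < R := div_pos (by linarith) hcb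
    set m : ℝ := max 0 (Real.log R / (2*θ*T a)) with hm_def
    have hm0 : (0:ℝ) ≤ m := le_max_left _ _
    have h2θτ : 0 < 2*θ*T a := by nlinarith
    have hlog : Real.log R ≤ 2*θ*m*T a := by
      have h1 : Real.log R / (2*θ*T a) ≤ m := le_max_right _ _
      have h2 := (div_le_iff₀ h2θτ).1 h1
      calc Real.log R ≤ m * (2*θ*T a) := h2
        _ = 2*θ*m*T a := by ring
    have hexp : R ≤ Real.exp (2*θ*m*T a) := by
      rw [← Real.exp_log hRpos]
      exact Real.exp_le_exp.2 hlog
    have hfinal : C + 1 ≤ (c * Real.exp (2*θ*m*T a)) * (b - a) := by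
      rw [hR_def, div_le_iff₀ hcb] at hexp
      nlinarith [hexp]
    refine ⟨m, ?_⟩
    have h1 := hIic_lb m hm0
    have h2 := le_trans (hIcc_lb m hm0) (hIoi_lb m)
    have h3 := hsplit m
    linarith
  -- negative bump interval left of x₀
  have hUopen' : IsOpen {x : ℝ | x < x₀ ∧ f x < 0} := by
    have : {x : ℝ | x < x₀ ∧ f x < 0} = (Set.Iio x₀) ∩ f ⁻¹' (Set.Iio 0) := rfl
    rw [this]
    exact isOpen_Iio.inter (isOpen_Iio.preimage hf)
  obtain ⟨ε', hε', hball'⟩ := Metric.isOpen_iff.1 hUopen' xm ⟨hxm, hfm⟩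
  set a' : ℝ := xm - ε'/2 with ha'_def
  set b' : ℝ := xm + ε'/2 with hb'_def
  have hab' : a' < b' := by simp only [ha'_def, hb'_def]; linarith
  have hsub' : Icc a' b' ⊆ {x : ℝ | x < x₀ ∧ f x < 0} := by
    intro x hx
    apply hball'
    rw [Metric.mem_ball, Real.dist_eq, abs_lt]
    obtain ⟨h1, h2⟩ := hx
    constructor
    · simp only [ha'_def] at h1; linarith
    · simp only [hb'_def] at h2; linarith
  have hb'0 : b' < x₀ := (hsub' ⟨hab'.le, le_rfl⟩).1
  obtain ⟨z', hz'mem, hz'max⟩ := isCompact_Icc.exists_isMaxOn (Set.nonempty_Icc.2 hab'.le)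
    ((hf.mul hA_cont).continuousOn)
  set c' : ℝ := -(f z' * A z') with hc'_def
  have hc' : 0 < c' := by
    have := mul_neg_of_neg_of_pos (hsub' hz'mem).2 (hA_pos z')
    simp only [hc'_def]; linarith
  have hτ' : T b' < 0 := lt_of_le_of_lt (hT_ub b' hb'0.le)
    (mul_neg_of_neg_of_pos (by linarith) (one_div_pos.2 hσhi2))
  have hIcc_ub : ∀ m, m ≤ 0 →
      (∫ x in Icc a' b', g m x) ≤ -((c' * Real.exp (2*θ*m*T b')) * (b' - a')) := by
    intro m hm
    have hpt : ∀ x ∈ Icc a' b', c' * Real.exp (2*θ*m*T b') ≤ -(g m x) := by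
      intro x hx
      have hTb : T x ≤ T b' := hT_mono hx.2
      have he : Real.exp (2*θ*m*T b') ≤ Real.exp (2*θ*m*T x) := Real.exp_le_exp.2
        (by nlinarith [mul_nonneg (mul_nonneg hθ.le (neg_nonneg.2 hm)) (sub_nonneg.2 hTb)])
      have hfa : f x * A x ≤ -c' := by
        have := isMaxOn_iff.1 hz'max x hx
        simp only [hc'_def, Pi.mul_apply] at this ⊢; linarith [this]
      simp only [hg_def]
      calc c' * Real.exp (2*θ*m*T b') ≤ c' * Real.exp (2*θ*m*T x) :=
            mul_le_mul_of_nonneg_left he hc'.le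
        _ ≤ (-(f x * A x)) * Real.exp (2*θ*m*T x) :=
            mul_le_mul_of_nonneg_right (by linarith) (Real.exp_pos _).le
        _ = -(f x * A x * Real.exp (2*θ*m*T x)) := by ring
    have h := setIntegral_ge_of_const_le (μ := volume) measurableSet_Icc
      (by rw [Real.volume_Icc]; exact ofReal_ne_top) hpt ((hgi m).neg.integrableOn)
    rw [measureReal_def, Real.volume_Icc, ENNReal.toReal_ofReal (by linarith), smul_eq_mul] at h
    rw [integral_neg] at h
    linarith
  have hIic_ub : ∀ m, (∫ x in Iic x₀, g m x) ≤ ∫ x in Icc a' b', g m x := by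
    intro m
    have hsubset : Icc a' b' ⊆ Iic x₀ := fun x hx => le_trans hx.2 hb'0.le
    have h := setIntegral_mono_set ((hgi m).neg.integrableOn (s := Iic x₀)) ?_
      (HasSubset.Subset.eventuallyLE hsubset)
    · simp only [Pi.neg_apply, integral_neg] at h
      linarith
    refine (ae_restrict_iff' measurableSet_Iic).2 (ae_of_all _ fun x hx => ?_)
    have hgm : g m x ≤ 0 := by
      simp only [hg_def]
      exact mul_nonpos_of_nonpos_of_nonneg
        (mul_nonpos_of_nonpos_of_nonneg (hneg x hx) (hA_pos x).le) (Real.exp_pos _).le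
    simpa using neg_nonneg.2 hgm
  have hGneg : ∃ m, G m < 0 := by
    set R' : ℝ := (C + 1)/(c' * (b' - a')) with hR'_def
    have hcb' : 0 < c' * (b' - a') := mul_pos hc' (by linarith)
    have hR'pos : 0 < R' := div_pos (by linarith) hcb'
    set m : ℝ := min 0 (Real.log R' / (2*θ*T b')) with hm_def
    have hm0 : m ≤ (0:ℝ) := min_le_left _ _
    have h2θτ' : 2*θ*T b' < 0 := by nlinarith
    have hlog : Real.log R' ≤ 2*θ*m*T b' := by
      have h1 : m ≤ Real.log R' / (2*θ*T b') := min_le_right _ _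
      have h2 := mul_le_mul_of_nonpos_right h1 h2θτ'.le
      rw [div_mul_cancel₀ _ (ne_of_lt h2θτ')] at h2
      calc Real.log R' ≤ m * (2*θ*T b') := h2
        _ = 2*θ*m*T b' := by ring
    have hexp : R' ≤ Real.exp (2*θ*m*T b') := by
      rw [← Real.exp_log hR'pos]
      exact Real.exp_le_exp.2 hlog
    have hfinal : C + 1 ≤ (c' * Real.exp (2*θ*m*T b')) * (b' - a') := by
      rw [hR'_def, div_le_iff₀ hcb'] at hexp
      nlinarith [hexp]
    refine ⟨m, ?_⟩
    have h1 := hIoi_ub m hm0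
    have h2 := le_trans (hIic_ub m) (hIcc_ub m hm0)
    have h3 := hsplit m
    linarith
  -- conclusion
  obtain ⟨m1, hm1⟩ := hGneg
  obtain ⟨m2, hm2⟩ := hGpos
  have h12 : m1 < m2 := by
    by_contra h
    push_neg at h
    have := hG_mono.monotone h
    linarith
  obtain ⟨mstar, hmem, hGstar⟩ := intermediate_value_Icc h12.le hG_cont.continuousOn
    (Set.mem_Icc.2 ⟨hm1.le, hm2.le⟩)
  have hFG : ∀ m : ℝ,
      (∫ x, f x * Real.exp (-2 * ∫ y in (0:ℝ)..x, (V' y + θ * y - θ * m) / (σ y) ^ 2))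
        = Real.exp (2*θ*m*s0) * G m := by
    intro m
    simp only [hG_def]
    simp only [key m]
    exact integral_const_mul _ _
  refine ⟨mstar, ?_, ?_⟩
  · exact (hFG mstar).trans (by rw [hGstar, mul_zero])
  · intro y hy
    have hy' : Real.exp (2*θ*y*s0) * G y = 0 := (hFG y).symm.trans hy
    rcases mul_eq_zero.1 hy' with hy2 | hy2
    · exact absurd hy2 (Real.exp_ne_zero _)
    · exact hG_mono.injective (hy2.trans hGstar.symm)
end
end
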